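/- arXiv:1701.02634 — 6 statements merged into one kernel-verified Lean document; each statement's English description precedes it below -/
import Mathlib

section
/- If X_1,...,X_n are i.i.d. uniform on [0,1], then the distribution of the i-th smallest among them equals the marginal distribution of the i-th coordinate under the uniform distribution on the order simplex {0 ≤ x_1 ≤ ... ≤ x_n ≤ 1}. -/
open MeasureTheory

lemma noninj_null (n : ℕ) :
    volume {x : Fin n → ℝ | ¬ Function.Injective x} = 0 := by
  have h : {x : Fin n → ℝ | ¬ Function.Injective x}
      ⊆ ⋃ (j : Fin n) (k : Fin n) (_ : j ≠ k), {x : Fin n → ℝ | x j = x k} := by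
    intro x hx
    simp only [Function.Injective, not_forall] at hx
    obtain ⟨j, k, hjk, hne⟩ := hx
    exact Set.mem_iUnion.2 ⟨j, Set.mem_iUnion.2 ⟨k, Set.mem_iUnion.2 ⟨hne, hjk⟩⟩⟩
  refine measure_mono_null h ?_
  refine measure_iUnion_null fun j => measure_iUnion_null fun k =>
    measure_iUnion_null fun hjk => ?_
  have hker : {x : Fin n → ℝ | x j = x k}
      = (LinearMap.ker ((LinearMap.proj j : (Fin n → ℝ) →ₗ[ℝ] ℝ) - LinearMap.proj k)
          : Set (Fin n → ℝ)) := by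
    ext x
    simp [LinearMap.mem_ker, sub_eq_zero]
  rw [hker]
  apply Measure.addHaar_submodule
  intro htop
  have hx : (Pi.single j (1:ℝ)) ∈
      LinearMap.ker ((LinearMap.proj j : (Fin n → ℝ) →ₗ[ℝ] ℝ) - LinearMap.proj k) :=
    htop ▸ Submodule.mem_top
  simp [LinearMap.mem_ker, Pi.single_apply, (Ne.symm hjk), sub_eq_zero] at hx

lemma perm_preimage (n : ℕ) (σ : Equiv.Perm (Fin n)) (C : Set (Fin n → ℝ))
    (hC : MeasurableSet C) :
    volume ((fun x : Fin n → ℝ => x ∘ σ) ⁻¹' C) = volume C := by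
  have h := volume_measurePreserving_piCongrLeft (fun _ : Fin n => ℝ) (σ.symm : Fin n ≃ Fin n)
  have he : ⇑(MeasurableEquiv.piCongrLeft (fun _ : Fin n => ℝ) (σ.symm : Fin n ≃ Fin n))
      = fun x : Fin n → ℝ => x ∘ σ := by
    funext x a
    have h2 := MeasurableEquiv.piCongrLeft_apply_apply
      (σ.symm : Fin n ≃ Fin n) (β := fun _ : Fin n => ℝ) x (σ a)
    simpa using h2
  rw [← he]
  exact h.measure_preimage hC.nullMeasurableSet

theorem order_statistic_eq_simplex_marginal (n : ℕ) (i : Fin n) (A : Set ℝ)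
    (hA : MeasurableSet A) :
    volume {x : Fin n → ℝ | x ∈ Set.Icc (0 : Fin n → ℝ) 1 ∧ x (Tuple.sort x i) ∈ A}
      = (n.factorial : ENNReal) *
        volume {x : Fin n → ℝ | ((∀ j, x j ∈ Set.Icc (0:ℝ) 1) ∧ Monotone x) ∧ x i ∈ A} := by
  classical
  set B : Set (Fin n → ℝ) :=
    {x | x ∈ Set.Icc (0 : Fin n → ℝ) 1 ∧ x (Tuple.sort x i) ∈ A} with hB
  set S : Set (Fin n → ℝ) :=
    {x | ((∀ j, x j ∈ Set.Icc (0:ℝ) 1) ∧ Monotone x) ∧ x i ∈ A} with hS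
  set C : Equiv.Perm (Fin n) → Set (Fin n → ℝ) :=
    fun σ => {x | (∀ j, x j ∈ Set.Icc (0:ℝ) 1) ∧ StrictMono (x ∘ σ) ∧ x (σ i) ∈ A} with hC
  -- membership in cube pointwise
  have cube_iff : ∀ x : Fin n → ℝ, x ∈ Set.Icc (0 : Fin n → ℝ) 1 ↔ ∀ j, x j ∈ Set.Icc (0:ℝ) 1 := by
    intro x
    simp [Set.mem_Icc, Pi.le_def, forall_and]
  -- injectivity from strict monotone composed with perm
  have inj_of : ∀ (x : Fin n → ℝ) (σ : Equiv.Perm (Fin n)), StrictMono (x ∘ σ) →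
      Function.Injective x := by
    intro x σ hsm
    have h1 : Function.Injective ((x ∘ σ) ∘ (σ.symm : Fin n → Fin n)) :=
      hsm.injective.comp σ.symm.injective
    have h2 : (x ∘ σ) ∘ (σ.symm : Fin n → Fin n) = x := by
      funext a; simp
    rwa [h2] at h1
  -- uniqueness of the sorting permutation for injective x
  have sort_unique : ∀ (x : Fin n → ℝ) (σ : Equiv.Perm (Fin n)),
      Function.Injective x → StrictMono (x ∘ σ) → Tuple.sort x = σ := by
    intro x σ hinj hsm
    have h := (Tuple.comp_sort_eq_comp_iff_monotone (f := x) (σ := σ)).2 hsm.monotone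
    refine (Equiv.ext fun j => ?_).symm
    exact hinj (congrFun h j)
  -- measurability of C σ
  have hCmeas : ∀ σ, MeasurableSet (C σ) := by
    intro σ
    have h1 : MeasurableSet {x : Fin n → ℝ | ∀ j, x j ∈ Set.Icc (0:ℝ) 1} := by
      have : {x : Fin n → ℝ | ∀ j, x j ∈ Set.Icc (0:ℝ) 1}
          = ⋂ j, (fun x : Fin n → ℝ => x j) ⁻¹' Set.Icc (0:ℝ) 1 := by ext x; simp
      rw [this]
      exact MeasurableSet.iInter fun j => (measurable_pi_apply j) measurableSet_Icc
    have h2 : MeasurableSet {x : Fin n → ℝ | StrictMono (x ∘ σ)} := by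
      have : {x : Fin n → ℝ | StrictMono (x ∘ σ)}
          = ⋂ (a : Fin n) (b : Fin n) (_ : a < b), {x : Fin n → ℝ | x (σ a) < x (σ b)} := by
        ext x
        simp only [Set.mem_iInter, Set.mem_setOf_eq]
        exact ⟨fun h a b hab => h hab, fun h a b hab => h a b hab⟩
      rw [this]
      exact MeasurableSet.iInter fun a => MeasurableSet.iInter fun b =>
        MeasurableSet.iInter fun _ =>
          measurableSet_lt (measurable_pi_apply _) (measurable_pi_apply _)
    have h3 : MeasurableSet {x : Fin n → ℝ | x (σ i) ∈ A} :=
      (measurable_pi_apply (σ i)) hA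
    exact h1.inter (h2.inter h3)
  -- B ∩ injective = union of C σ
  have hBU : B ∩ {x | Function.Injective x} = ⋃ σ, C σ := by
    ext x
    constructor
    · rintro ⟨⟨hxIcc, hxA⟩, hinj⟩
      refine Set.mem_iUnion.2 ⟨Tuple.sort x, ?_, ?_, hxA⟩
      · exact (cube_iff x).1 hxIcc
      · exact (Tuple.monotone_sort x).strictMono_of_injective
          (hinj.comp (Tuple.sort x).injective)
    · intro hx
      obtain ⟨σ, hcube, hsm, hxA⟩ := Set.mem_iUnion.1 hx
      have hinj := inj_of x σ hsm
      have hsort := sort_unique x σ hinj hsm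
      exact ⟨⟨(cube_iff x).2 hcube, by rw [hsort]; exact hxA⟩, hinj⟩
  -- pairwise disjoint
  have hdisj : Pairwise (Function.onFun Disjoint C) := by
    intro σ τ hne
    rw [Function.onFun, Set.disjoint_left]
    rintro x ⟨_, hsm1, _⟩ ⟨_, hsm2, _⟩
    have hinj := inj_of x σ hsm1
    exact hne ((sort_unique x σ hinj hsm1).symm.trans (sort_unique x τ hinj hsm2))
  -- each C σ has the same volume as C 1
  have hCvol : ∀ σ, volume (C σ) = volume (C 1) := by
    intro σ
    have : C σ = (fun x : Fin n → ℝ => x ∘ σ) ⁻¹' (C 1) := by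
      ext x
      simp only [hC, Set.mem_preimage, Set.mem_setOf_eq, Function.comp_apply,
        Equiv.Perm.coe_one, Function.comp_id, id_eq]
      constructor
      · rintro ⟨h1, h2, h3⟩
        refine ⟨fun j => h1 (σ j), ?_, h3⟩
        simpa [Function.comp] using h2
      · rintro ⟨h1, h2, h3⟩
        refine ⟨fun j => by simpa using h1 (σ.symm j), ?_, h3⟩
        simpa [Function.comp] using h2
    rw [this]
    exact perm_preimage n σ (C 1) (hCmeas 1)
  -- S ∩ injective = C 1
  have hSC : S ∩ {x | Function.Injective x} = C 1 := by
    ext x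
    simp only [hS, hC, Set.mem_inter_iff, Set.mem_setOf_eq, Equiv.Perm.coe_one,
      Function.comp_id, id_eq]
    constructor
    · rintro ⟨⟨⟨h1, h2⟩, h3⟩, hinj⟩
      exact ⟨h1, by simpa [Function.comp] using h2.strictMono_of_injective hinj, h3⟩
    · rintro ⟨h1, h2, h3⟩
      have h2' : StrictMono x := by simpa [Function.comp] using h2
      exact ⟨⟨⟨h1, h2'.monotone⟩, h3⟩, h2'.injective⟩
  -- reduce to injective parts
  have hred : ∀ T : Set (Fin n → ℝ), volume (T ∩ {x | Function.Injective x}) = volume T := by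
    intro T
    have : T ∩ {x | Function.Injective x} = T \ {x : Fin n → ℝ | ¬ Function.Injective x} := by
      ext x; simp [Set.mem_diff]
    rw [this]
    exact measure_diff_null (noninj_null n)
  -- put it together
  calc volume B = volume (B ∩ {x | Function.Injective x}) := (hred B).symm
    _ = volume (⋃ σ, C σ) := by rw [hBU]
    _ = ∑' σ, volume (C σ) := measure_iUnion hdisj hCmeas
    _ = ∑' _ : Equiv.Perm (Fin n), volume (C 1) := by simp_rw [hCvol]
    _ = (Fintype.card (Equiv.Perm (Fin n)) : ENNReal) * volume (C 1) := by
        rw [tsum_fintype]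
        simp [Finset.sum_const, nsmul_eq_mul]
    _ = (n.factorial : ENNReal) * volume (C 1) := by
        rw [Fintype.card_perm, Fintype.card_fin]
    _ = (n.factorial : ENNReal) * volume S := by
        rw [← hSC, hred S]
end

section
/- Let C be a finite set of order constraints x_i ≤ x_j on variables x_1,...,x_n defining a partial order (no ties implied), and let P ⊆ [0,1]^n be its admissible polytope. Then the volume of P equals N/n!, where N is the number of linear extensions of the partial order. -/
open MeasureTheory Set

namespace OPV
variable {n : ℕ}

/-- simplex region for permutation σ -/
def S (n : ℕ) (σ : Equiv.Perm (Fin n)) : Set (Fin n → ℝ) :=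
  {x | (∀ i, x i ∈ Set.Icc (0:ℝ) 1) ∧ StrictMono (x ∘ σ)}

lemma measurableSet_cube : MeasurableSet {x : Fin n → ℝ | ∀ i, x i ∈ Set.Icc (0:ℝ) 1} := by
  have : {x : Fin n → ℝ | ∀ i, x i ∈ Set.Icc (0:ℝ) 1} = ⋂ i, (fun x : Fin n → ℝ => x i) ⁻¹' Set.Icc 0 1 := by
    ext x; simp
  rw [this]
  exact MeasurableSet.iInter fun i => (measurable_pi_apply i) measurableSet_Icc

lemma measurableSet_S (σ : Equiv.Perm (Fin n)) : MeasurableSet (S n σ) := by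
  have : S n σ = {x : Fin n → ℝ | ∀ i, x i ∈ Set.Icc (0:ℝ) 1} ∩
      ⋂ (i) (j) (_ : i < j), {x : Fin n → ℝ | x (σ i) < x (σ j)} := by
    ext x
    simp only [S, Set.mem_inter_iff, Set.mem_setOf_eq, Set.mem_iInter]
    exact and_congr_right fun _ => ⟨fun h i j hij => h hij, fun h i j hij => h i j hij⟩
  rw [this]
  exact measurableSet_cube.inter <| .iInter fun i => .iInter fun j => .iInter fun _ =>
    measurableSet_lt (measurable_pi_apply _) (measurable_pi_apply _)

lemma strictMono_fin_id {f : Fin n → Fin n} (hf : StrictMono f) : f = id := by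
  haveI hwf : WellFoundedLT (Fin n) := inferInstance
  have hbij : Function.Bijective f :=
    ⟨hf.injective, Finite.surjective_of_injective hf.injective⟩
  set e := Equiv.ofBijective f hbij with he
  have hg : StrictMono (⇑e.symm) := by
    intro a b hab
    have : f (e.symm a) < f (e.symm b) := by
      have h1 : f (e.symm a) = a := e.apply_symm_apply a
      have h2 : f (e.symm b) = b := e.apply_symm_apply b
      rw [h1, h2]; exact hab
    exact hf.lt_iff_lt.mp this
  funext i
  have h1 : i ≤ f i := hf.le_apply
  have h2 : f i ≤ e.symm (f i) := hg.le_apply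
  have h3 : e.symm (f i) = i := e.symm_apply_apply i
  exact le_antisymm (h2.trans_eq h3) h1

lemma S_disjoint : Pairwise (Function.onFun Disjoint (S n)) := by
  intro σ τ hne
  rw [Function.onFun, Set.disjoint_left]
  rintro x ⟨-, hσ⟩ ⟨-, hτ⟩
  apply hne
  have hsm : StrictMono (fun i => σ.symm (τ i)) := by
    intro i j hij
    have : (x ∘ σ) (σ.symm (τ i)) < (x ∘ σ) (σ.symm (τ j)) := by
      simpa using hτ hij
    exact hσ.lt_iff_lt.mp this
  have hid := strictMono_fin_id hsm
  refine Equiv.ext fun i => ?_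
  have h1 : σ.symm (τ i) = i := congrFun hid i
  have h2 := congrArg σ h1
  simpa using h2.symm

/-- permutation action is measure preserving; all S σ have the same volume -/
lemma volume_S_eq (σ : Equiv.Perm (Fin n)) : volume (S n σ) = volume (S n 1) := by
  have hmp := volume_measurePreserving_piCongrLeft (fun _ : Fin n => ℝ) σ
  have hco : ∀ x : Fin n → ℝ, (MeasurableEquiv.piCongrLeft (fun _ : Fin n => ℝ) σ) x = x ∘ σ.symm := by
    intro x; funext i
    simp [MeasurableEquiv.piCongrLeft, Equiv.piCongrLeft_apply]
  have hpre : (MeasurableEquiv.piCongrLeft (fun _ : Fin n => ℝ) σ) ⁻¹' (S n σ) = S n 1 := by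
    ext x
    simp only [Set.mem_preimage, hco, S, Set.mem_setOf_eq]
    constructor
    · rintro ⟨h1, h2⟩
      exact ⟨fun i => by simpa using h1 (σ i), by simpa [Function.comp_def] using h2⟩
    · rintro ⟨h1, h2⟩
      exact ⟨fun i => h1 (σ.symm i), by simpa [Function.comp_def] using h2⟩
  calc volume (S n σ)
      = volume ((MeasurableEquiv.piCongrLeft (fun _ : Fin n => ℝ) σ) ⁻¹' (S n σ)) :=
        (hmp.measure_preimage (measurableSet_S σ).nullMeasurableSet).symm
    _ = volume (S n 1) := by rw [hpre]

lemma ties_null : volume {x : Fin n → ℝ | ∃ i j, i ≠ j ∧ x i = x j} = 0 := by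
  have : {x : Fin n → ℝ | ∃ i j, i ≠ j ∧ x i = x j} =
      ⋃ (i : Fin n) (j : Fin n) (_ : i ≠ j), {x : Fin n → ℝ | x i = x j} := by
    ext x; simp [Set.mem_iUnion]
  rw [this]
  refine measure_iUnion_null fun i => measure_iUnion_null fun j => measure_iUnion_null fun hij => ?_
  have : {x : Fin n → ℝ | x i = x j} =
      (LinearMap.ker (LinearMap.proj (R := ℝ) (φ := fun _ : Fin n => ℝ) i - LinearMap.proj j) : Set (Fin n → ℝ)) := by
    ext x
    simp [LinearMap.mem_ker, sub_eq_zero]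
  rw [this]
  apply Measure.addHaar_submodule
  intro htop
  have h1 : (Pi.single i 1 : Fin n → ℝ) ∈ LinearMap.ker (LinearMap.proj (R := ℝ) (φ := fun _ : Fin n => ℝ) i - LinearMap.proj j) := by
    rw [htop]; trivial
  simp only [LinearMap.mem_ker, LinearMap.sub_apply, LinearMap.proj_apply, sub_eq_zero] at h1
  rw [Pi.single_eq_same, Pi.single_eq_of_ne (Ne.symm hij)] at h1
  exact one_ne_zero h1



lemma cube_diff_subset :
    {x : Fin n → ℝ | ∀ i, x i ∈ Set.Icc (0:ℝ) 1} \ {x : Fin n → ℝ | ∃ i j, i ≠ j ∧ x i = x j}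
      ⊆ ⋃ σ : Equiv.Perm (Fin n), S n σ := by
  rintro x ⟨hcube, hties⟩
  have hinj : Function.Injective x := by
    intro i j hij
    by_contra hne
    exact hties ⟨i, j, hne, hij⟩
  refine Set.mem_iUnion.2 ⟨Tuple.sort x, hcube, ?_⟩
  exact (Tuple.monotone_sort x).strictMono_of_injective (hinj.comp (Tuple.sort x).injective)

lemma volume_cube : volume {x : Fin n → ℝ | ∀ i, x i ∈ Set.Icc (0:ℝ) 1} = 1 := by
  have : {x : Fin n → ℝ | ∀ i, x i ∈ Set.Icc (0:ℝ) 1} =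
      Set.pi Set.univ (fun _ : Fin n => Set.Icc (0:ℝ) 1) := by
    ext x; simp only [Set.mem_setOf_eq, Set.mem_univ_pi]
  rw [this, volume_pi_pi]
  simp [Real.volume_Icc]

lemma sum_S (F : Finset (Equiv.Perm (Fin n))) :
    volume (⋃ σ ∈ F, S n σ) = (F.card : ENNReal) * volume (S n 1) := by
  rw [measure_biUnion_finset (fun σ _ τ _ h => S_disjoint h) (fun σ _ => measurableSet_S σ)]
  rw [Finset.sum_congr rfl (fun σ _ => volume_S_eq σ), Finset.sum_const, nsmul_eq_mul]

lemma volume_S_one : volume (S n (1 : Equiv.Perm (Fin n))) = ((n.factorial : ENNReal))⁻¹ := by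
  have hfull : volume (⋃ σ ∈ (Finset.univ : Finset (Equiv.Perm (Fin n))), S n σ) = 1 := by
    apply le_antisymm
    · calc volume (⋃ σ ∈ (Finset.univ : Finset (Equiv.Perm (Fin n))), S n σ)
          ≤ volume {x : Fin n → ℝ | ∀ i, x i ∈ Set.Icc (0:ℝ) 1} := by
            apply measure_mono
            intro x hx
            simp only [Set.mem_iUnion] at hx
            obtain ⟨σ, -, hσ, -⟩ := hx
            exact hσ
        _ = 1 := volume_cube
    · calc (1 : ENNReal) = volume {x : Fin n → ℝ | ∀ i, x i ∈ Set.Icc (0:ℝ) 1} := volume_cube.symm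
        _ ≤ volume ((⋃ σ ∈ (Finset.univ : Finset (Equiv.Perm (Fin n))), S n σ) ∪
            {x : Fin n → ℝ | ∃ i j, i ≠ j ∧ x i = x j}) := by
            apply measure_mono
            intro x hx
            by_cases ht : x ∈ {x : Fin n → ℝ | ∃ i j, i ≠ j ∧ x i = x j}
            · exact Or.inr ht
            · left
              have := cube_diff_subset ⟨hx, ht⟩
              simpa using this
        _ ≤ volume (⋃ σ ∈ (Finset.univ : Finset (Equiv.Perm (Fin n))), S n σ) +
            volume {x : Fin n → ℝ | ∃ i j, i ≠ j ∧ x i = x j} := measure_union_le _ _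
        _ = volume (⋃ σ ∈ (Finset.univ : Finset (Equiv.Perm (Fin n))), S n σ) := by
            rw [ties_null, add_zero]
  rw [sum_S] at hfull
  have hcard : ((Finset.univ : Finset (Equiv.Perm (Fin n))).card : ENNReal) = (n.factorial : ENNReal) := by
    rw [← Fintype.card, Fintype.card_perm, Fintype.card_fin]
  rw [hcard] at hfull
  have hne : (n.factorial : ENNReal) ≠ 0 := by
    simp [Nat.factorial_ne_zero]
  have hnt : (n.factorial : ENNReal) ≠ ⊤ := ENNReal.natCast_ne_top _
  calc volume (S n 1) = ((n.factorial : ENNReal))⁻¹ * ((n.factorial : ENNReal) * volume (S n 1)) := by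
        rw [← mul_assoc, ENNReal.inv_mul_cancel hne hnt, one_mul]
    _ = ((n.factorial : ENNReal))⁻¹ := by rw [hfull, mul_one]

end OPV

theorem order_polytope_volume_eq_linear_extensions (n : ℕ) (C : Finset (Fin n × Fin n))
    (hanti : ∀ i j : Fin n, Relation.ReflTransGen (fun a b => (a, b) ∈ C) i j →
      Relation.ReflTransGen (fun a b => (a, b) ∈ C) j i → i = j) :
    volume {x : Fin n → ℝ | (∀ i, x i ∈ Set.Icc (0:ℝ) 1) ∧ ∀ p ∈ C, x p.1 ≤ x p.2}
      = (Fintype.card {σ : Equiv.Perm (Fin n) // ∀ p ∈ C, σ.symm p.1 ≤ σ.symm p.2} : ENNReal)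
        / (n.factorial : ENNReal) := by
  classical
  set E := Finset.univ.filter
    (fun σ : Equiv.Perm (Fin n) => ∀ p ∈ C, σ.symm p.1 ≤ σ.symm p.2) with hE
  have hsub1 : (⋃ σ ∈ E, OPV.S n σ) ⊆
      {x : Fin n → ℝ | (∀ i, x i ∈ Set.Icc (0:ℝ) 1) ∧ ∀ p ∈ C, x p.1 ≤ x p.2} := by
    intro x hx
    simp only [Set.mem_iUnion] at hx
    obtain ⟨σ, hσE, hcube, hsm⟩ := hx
    refine ⟨hcube, fun p hp => ?_⟩
    rw [hE, Finset.mem_filter] at hσE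
    have hle := hsm.monotone (hσE.2 p hp)
    simpa using hle
  have hsub2 : {x : Fin n → ℝ | (∀ i, x i ∈ Set.Icc (0:ℝ) 1) ∧ ∀ p ∈ C, x p.1 ≤ x p.2} ⊆
      (⋃ σ ∈ E, OPV.S n σ) ∪ {x : Fin n → ℝ | ∃ i j, i ≠ j ∧ x i = x j} := by
    rintro x ⟨hcube, hC⟩
    by_cases ht : x ∈ {x : Fin n → ℝ | ∃ i j, i ≠ j ∧ x i = x j}
    · exact Or.inr ht
    · left
      obtain ⟨σ, hσ⟩ := Set.mem_iUnion.1 (OPV.cube_diff_subset ⟨hcube, ht⟩)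
      simp only [Set.mem_iUnion]
      refine ⟨σ, ?_, hσ⟩
      rw [hE, Finset.mem_filter]
      refine ⟨Finset.mem_univ _, fun p hp => ?_⟩
      by_contra hlt
      push_neg at hlt
      have h2 := hσ.2 hlt
      simp only [Function.comp_apply, Equiv.apply_symm_apply] at h2
      exact absurd (hC p hp) (not_le.2 h2)
  have h1 : volume {x : Fin n → ℝ | (∀ i, x i ∈ Set.Icc (0:ℝ) 1) ∧ ∀ p ∈ C, x p.1 ≤ x p.2}
      = volume (⋃ σ ∈ E, OPV.S n σ) := by
    apply le_antisymm
    · calc volume {x : Fin n → ℝ | (∀ i, x i ∈ Set.Icc (0:ℝ) 1) ∧ ∀ p ∈ C, x p.1 ≤ x p.2}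
          ≤ volume ((⋃ σ ∈ E, OPV.S n σ) ∪ {x : Fin n → ℝ | ∃ i j, i ≠ j ∧ x i = x j}) :=
            measure_mono hsub2
        _ ≤ volume (⋃ σ ∈ E, OPV.S n σ) +
            volume {x : Fin n → ℝ | ∃ i j, i ≠ j ∧ x i = x j} := measure_union_le _ _
        _ = volume (⋃ σ ∈ E, OPV.S n σ) := by rw [OPV.ties_null, add_zero]
    · exact measure_mono hsub1
  have hcard : (Fintype.card {σ : Equiv.Perm (Fin n) // ∀ p ∈ C, σ.symm p.1 ≤ σ.symm p.2}) =
      E.card := Fintype.card_subtype _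
  rw [h1, OPV.sum_S, OPV.volume_S_one, hcard, div_eq_mul_inv]
end

section
/- Let C be a set of order constraints on x_1,...,x_n whose partial order has N linear extensions, and suppose the expected rank of x_i under the uniform distribution on the admissible polytope is r (i.e., r = (1/N)·Σ over linear extensions T of the rank of x_i in T). Then the expected value of x_i under the uniform distribution on the admissible polytope equals r/(n+1). -/
open MeasureTheory Set ENNReal

namespace EVH

variable {m : ℕ}

/-- The order simplex associated to a permutation σ: points of the unit cube whose
coordinates are nondecreasing along σ. -/
def S (σ : Equiv.Perm (Fin m)) : Set (Fin m → ℝ) :=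
  {x | (∀ j, x j ∈ Set.Icc (0:ℝ) 1) ∧ Monotone (x ∘ σ)}

lemma measurableSet_S (σ : Equiv.Perm (Fin m)) : MeasurableSet (S σ) := by
  have h1 : MeasurableSet {x : Fin m → ℝ | ∀ j, x j ∈ Set.Icc (0:ℝ) 1} := by
    rw [show {x : Fin m → ℝ | ∀ j, x j ∈ Set.Icc (0:ℝ) 1} = ⋂ j, (fun x => x j) ⁻¹' Set.Icc 0 1
      by ext x; simp]
    exact MeasurableSet.iInter fun j => (measurable_pi_apply j) measurableSet_Icc
  have h2 : MeasurableSet {x : Fin m → ℝ | Monotone (x ∘ σ)} := by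
    rw [show {x : Fin m → ℝ | Monotone (x ∘ σ)}
        = ⋂ (a) (b) (_ : a ≤ b), {x : Fin m → ℝ | x (σ a) ≤ x (σ b)} by
      ext x; simp only [Set.mem_setOf_eq, Set.mem_iInter, Monotone]; rfl]
    refine MeasurableSet.iInter fun a => MeasurableSet.iInter fun b =>
      MeasurableSet.iInter fun _ => ?_
    exact measurableSet_le (measurable_pi_apply _) (measurable_pi_apply _)
  exact h1.inter h2

lemma null_pair {a b : Fin m} (h : a ≠ b) : volume {x : Fin m → ℝ | x a = x b} = 0 := by
  have : {x : Fin m → ℝ | x a = x b}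
      = (LinearMap.ker ((LinearMap.proj a : (Fin m → ℝ) →ₗ[ℝ] ℝ) - LinearMap.proj b) : Set _) := by
    ext x
    simp [LinearMap.mem_ker, sub_eq_zero]
  rw [this]
  refine Measure.addHaar_submodule _ _ ?_
  intro htop
  have : (Pi.single a 1 : Fin m → ℝ) ∈ LinearMap.ker
      ((LinearMap.proj a : (Fin m → ℝ) →ₗ[ℝ] ℝ) - LinearMap.proj b) := htop ▸ trivial
  simp [LinearMap.mem_ker, Pi.single_apply, h.symm, h] at this

lemma null_zero (a : Fin m) : volume {x : Fin m → ℝ | x a = 0} = 0 := by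
  have : {x : Fin m → ℝ | x a = 0}
      = (LinearMap.ker (LinearMap.proj a : (Fin m → ℝ) →ₗ[ℝ] ℝ) : Set _) := by
    ext x; simp [LinearMap.mem_ker]
  rw [this]
  refine Measure.addHaar_submodule _ _ ?_
  intro htop
  have : (Pi.single a 1 : Fin m → ℝ) ∈ LinearMap.ker
      (LinearMap.proj a : (Fin m → ℝ) →ₗ[ℝ] ℝ) := htop ▸ trivial
  simp [LinearMap.mem_ker] at this

/-- The set of points with at least two equal coordinates (null set). -/
def Ties (m : ℕ) : Set (Fin m → ℝ) := ⋃ (a) (b) (_ : a ≠ b), {x : Fin m → ℝ | x a = x b}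

lemma null_Ties : volume (Ties m) = 0 := by
  refine measure_iUnion_null fun a => measure_iUnion_null fun b => measure_iUnion_null fun h =>
    null_pair h

lemma inter_S_subset_Ties {σ τ : Equiv.Perm (Fin m)} (h : σ ≠ τ) :
    S σ ∩ S τ ⊆ Ties m := by
  intro x ⟨hσ, hτ⟩
  by_contra hx
  have hinj : Function.Injective x := by
    intro a b hab
    by_contra hne
    exact hx (Set.mem_iUnion.2 ⟨a, Set.mem_iUnion.2 ⟨b, Set.mem_iUnion.2 ⟨hne, hab⟩⟩⟩)
  have hsm : StrictMono (x ∘ σ) := hσ.2.strictMono_of_injective (hinj.comp σ.injective)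
  have htm : StrictMono (x ∘ τ) := hτ.2.strictMono_of_injective (hinj.comp τ.injective)
  have hπ : StrictMono (fun t => σ.symm (τ t)) := by
    intro a b hab
    have : (x ∘ σ) (σ.symm (τ a)) < (x ∘ σ) (σ.symm (τ b)) := by
      simpa [Function.comp] using htm hab
    exact hsm.lt_iff_lt.1 this
  have hsurj : Function.Surjective (fun t => σ.symm (τ t)) :=
    σ.symm.surjective.comp τ.surjective
  have : ∀ t, σ.symm (τ t) = t := by
    intro t
    have heq := Subsingleton.elim (StrictMono.orderIsoOfSurjective _ hπ hsurj)
      (OrderIso.refl (Fin m))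
    have := congrFun (congrArg (fun (e : Fin m ≃o Fin m) => (e : Fin m → Fin m)) heq) t
    simpa using this
  apply h
  ext t
  have h2 := this (τ.symm (σ t))
  simp only [Equiv.apply_symm_apply] at h2
  have h3 : τ (τ.symm (σ t)) = τ t := congrArg τ (σ.injective (by simpa using (congrArg σ h2).symm))
  exact congrArg Fin.val (by simpa using h3)

end EVH

namespace EVH

lemma aedisjoint_S {σ τ : Equiv.Perm (Fin m)} (h : σ ≠ τ) :
    AEDisjoint volume (S σ) (S τ) :=
  measure_mono_null (inter_S_subset_Ties h) null_Ties

lemma vol_S_eq (σ τ : Equiv.Perm (Fin m)) : volume (S σ) = volume (S τ) := by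
  have key : ∀ (f : Fin m ≃ Fin m) (ρ : Equiv.Perm (Fin m)),
      (MeasurableEquiv.piCongrLeft (fun _ => ℝ) f) ⁻¹' (S ρ) = S (ρ.trans f.symm) := by
    intro f ρ
    ext x
    have happ : ∀ j, (MeasurableEquiv.piCongrLeft (fun _ => ℝ) f) x j = x (f.symm j) := by
      intro j
      rw [MeasurableEquiv.piCongrLeft]
      simp [Equiv.piCongrLeft]
    constructor
    · rintro ⟨hc, hm⟩
      refine ⟨fun j => by simpa [happ] using hc (f j), ?_⟩
      intro a b hab
      simpa [happ] using hm hab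
    · rintro ⟨hc, hm⟩
      refine ⟨fun j => by simpa [happ] using hc (f.symm j), ?_⟩
      intro a b hab
      simpa [happ] using hm hab
  have mp := MeasureTheory.volume_measurePreserving_piCongrLeft (fun _ : Fin m => ℝ)
    (σ.symm.trans τ)
  have := mp.measure_preimage (measurableSet_S τ).nullMeasurableSet
  rw [key] at this
  rw [← this]
  have hperm : τ.trans (σ.symm.trans τ).symm = σ := by
    ext t; simp
  rw [hperm]

lemma vol_biUnion (F : Finset (Equiv.Perm (Fin m))) :
    volume (⋃ σ ∈ F, S σ) = F.card * volume (S (1 : Equiv.Perm (Fin m))) := by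
  rw [measure_biUnion_finset₀ (fun σ _ τ _ h => aedisjoint_S h)
    (fun σ _ => (measurableSet_S σ).nullMeasurableSet)]
  rw [Finset.sum_congr rfl (fun σ _ => vol_S_eq σ 1), Finset.sum_const, nsmul_eq_mul]

lemma iUnion_S_eq : (⋃ σ : Equiv.Perm (Fin m), S σ) = Set.pi Set.univ (fun _ => Set.Icc (0:ℝ) 1) := by
  ext x
  constructor
  · rintro ⟨_, ⟨σ, rfl⟩, hc, _⟩
    intro j _
    exact hc j
  · intro hx
    exact Set.mem_iUnion.2 ⟨Tuple.sort x, fun j => hx j (Set.mem_univ _), Tuple.monotone_sort x⟩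

lemma vol_S (σ : Equiv.Perm (Fin m)) :
    volume (S σ) = ((m.factorial : ℝ≥0∞))⁻¹ := by
  have hcube : volume (Set.pi Set.univ (fun _ : Fin m => Set.Icc (0:ℝ) 1)) = 1 := by
    rw [volume_pi_pi]
    simp [Real.volume_Icc]
  have htot : (m.factorial : ℝ≥0∞) * volume (S (1 : Equiv.Perm (Fin m))) = 1 := by
    have := vol_biUnion (m := m) Finset.univ
    simp only [Finset.mem_univ, Set.iUnion_true] at this
    rw [iUnion_S_eq, hcube] at this
    rw [Finset.card_univ, Fintype.card_perm, Fintype.card_fin] at this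
    exact this.symm
  rw [vol_S_eq σ 1]
  have hne : (m.factorial : ℝ≥0∞) ≠ 0 := Nat.cast_ne_zero.2 m.factorial_ne_zero
  have hnt : (m.factorial : ℝ≥0∞) ≠ ⊤ := ENNReal.natCast_ne_top _
  calc volume (S (1 : Equiv.Perm (Fin m)))
      = (m.factorial : ℝ≥0∞)⁻¹ * ((m.factorial : ℝ≥0∞) * volume (S 1)) := by
        rw [← mul_assoc, ENNReal.inv_mul_cancel hne hnt, one_mul]
    _ = (m.factorial : ℝ≥0∞)⁻¹ := by rw [htot, mul_one]

end EVH

namespace EVH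

/-- Insert a new smallest-index coordinate at position `j` in the ordering `σ`. -/
def ins (σ : Equiv.Perm (Fin m)) (j : Fin (m + 1)) : Equiv.Perm (Fin (m + 1)) :=
  (finSuccEquiv' j).trans ((Equiv.optionCongr σ).trans (finSuccEquiv' (0 : Fin (m + 1))).symm)

lemma ins_self (σ : Equiv.Perm (Fin m)) (j : Fin (m + 1)) : ins σ j j = 0 := by
  simp [ins, finSuccEquiv'_at, finSuccEquiv'_symm_none]

lemma ins_succAbove (σ : Equiv.Perm (Fin m)) (j : Fin (m + 1)) (t : Fin m) :
    ins σ j (j.succAbove t) = (σ t).succ := by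
  simp [ins, finSuccEquiv'_succAbove, finSuccEquiv'_symm_some, Fin.zero_succAbove]

lemma ins_injective (σ : Equiv.Perm (Fin m)) : Function.Injective (ins σ) := by
  intro j j' h
  have h1 : ins σ j' j = 0 := h ▸ ins_self σ j
  have h2 : ins σ j' j' = 0 := ins_self σ j'
  exact (ins σ j').injective (h1.trans h2.symm)

lemma ins_castSucc_lt (σ : Equiv.Perm (Fin m)) {j₀ t : Fin m} (h : t < j₀) :
    ins σ j₀.castSucc t.castSucc = (σ t).succ := by
  have : j₀.castSucc.succAbove t = t.castSucc :=
    Fin.succAbove_of_castSucc_lt _ _ (by simpa using h)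
  rw [← this, ins_succAbove]

lemma ins_succ_ge (σ : Equiv.Perm (Fin m)) {j₀ t : Fin m} (h : j₀ ≤ t) :
    ins σ j₀.castSucc t.succ = (σ t).succ := by
  have : j₀.castSucc.succAbove t = t.succ :=
    Fin.succAbove_of_le_castSucc _ _ (by simpa using h)
  rw [← this, ins_succAbove]

lemma mem_S_ins (σ : Equiv.Perm (Fin m)) (j₀ : Fin m) (y : Fin (m + 1) → ℝ) :
    y ∈ S (ins σ j₀.castSucc) ↔
      (∀ l, y l ∈ Set.Icc (0:ℝ) 1) ∧ Monotone (fun t : Fin m => y (σ t).succ) ∧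
      (∀ t : Fin m, t < j₀ → y (σ t).succ ≤ y 0) ∧
      (∀ t : Fin m, j₀ ≤ t → y 0 ≤ y (σ t).succ) := by
  have hself : y (ins σ j₀.castSucc j₀.castSucc) = y 0 := by rw [ins_self]
  constructor
  · rintro ⟨hc, hm⟩
    refine ⟨hc, ?_, ?_, ?_⟩
    · intro a b hab
      have := hm ((Fin.strictMono_succAbove j₀.castSucc).monotone hab)
      simpa only [Function.comp_apply, ins_succAbove] using this
    · intro t ht
      have := hm (le_of_lt (show t.castSucc < j₀.castSucc by simpa using ht))
      simpa only [Function.comp_apply, ins_castSucc_lt σ ht, hself] using this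
    · intro t ht
      have := hm (le_of_lt (show j₀.castSucc < t.succ by simpa using ht))
      simpa only [Function.comp_apply, ins_succ_ge σ ht, hself] using this
  · rintro ⟨hc, hm, hlt, hge⟩
    refine ⟨hc, ?_⟩
    intro a b hab
    simp only [Function.comp_apply]
    rcases lt_trichotomy a j₀.castSucc with ha | ha | ha
    · obtain ⟨ta, rfl⟩ : ∃ t : Fin m, t.castSucc = a :=
        Fin.exists_castSucc_eq.2 (by exact ne_of_lt (lt_of_lt_of_le ha j₀.castSucc.le_last))
      have hta : ta < j₀ := by simpa using ha
      rw [ins_castSucc_lt σ hta]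
      rcases lt_trichotomy b j₀.castSucc with hb | hb | hb
      · obtain ⟨tb, rfl⟩ : ∃ t : Fin m, t.castSucc = b :=
          Fin.exists_castSucc_eq.2
            (by exact ne_of_lt (lt_of_lt_of_le hb j₀.castSucc.le_last))
        have htb : tb < j₀ := by simpa using hb
        rw [ins_castSucc_lt σ htb]
        exact hm (by simpa using hab)
      · subst hb
        rw [ins_self]
        exact hlt ta hta
      · obtain ⟨tb, rfl⟩ : ∃ t : Fin m, t.succ = b := Fin.exists_succ_eq_of_ne_zero
          (by exact ne_of_gt (lt_of_le_of_lt (Fin.zero_le _) hb))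
        have htb : j₀ ≤ tb := by rwa [Fin.castSucc_lt_succ_iff] at hb
        rw [ins_succ_ge σ htb]
        exact le_trans (hlt ta hta) (hge tb htb)
    · subst ha
      rw [ins_self]
      rcases eq_or_lt_of_le hab with hb | hb
      · rw [← hb, ins_self]
      · obtain ⟨tb, rfl⟩ : ∃ t : Fin m, t.succ = b := Fin.exists_succ_eq_of_ne_zero
          (by exact ne_of_gt (lt_of_le_of_lt (Fin.zero_le _) hb))
        have htb : j₀ ≤ tb := by rwa [Fin.castSucc_lt_succ_iff] at hb
        rw [ins_succ_ge σ htb]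
        exact hge tb htb
    · obtain ⟨ta, rfl⟩ : ∃ t : Fin m, t.succ = a := Fin.exists_succ_eq_of_ne_zero
        (by exact ne_of_gt (lt_of_le_of_lt (Fin.zero_le _) ha))
      have hta : j₀ ≤ ta := by rwa [Fin.castSucc_lt_succ_iff] at ha
      rw [ins_succ_ge σ hta]
      obtain ⟨tb, rfl⟩ : ∃ t : Fin m, t.succ = b := Fin.exists_succ_eq_of_ne_zero
        (by exact ne_of_gt (lt_of_lt_of_le (lt_of_le_of_lt (Fin.zero_le _) ha) hab))
      have htb : j₀ ≤ tb := le_trans hta (by simpa using hab)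
      rw [ins_succ_ge σ htb]
      exact hm (by simpa using hab)

end EVH

namespace EVH

/-- Region under the graph of `x i` over the simplex `S σ`, viewed in dimension `m+1`
with the extra variable in coordinate `0`. -/
def R (σ : Equiv.Perm (Fin m)) (i : Fin m) : Set (Fin (m + 1) → ℝ) :=
  {y | (fun t : Fin m => y t.succ) ∈ S σ ∧ y 0 ∈ Set.Ioo 0 (y i.succ)}

def Rbar (σ : Equiv.Perm (Fin m)) (i : Fin m) : Set (Fin (m + 1) → ℝ) :=
  {y | (fun t : Fin m => y t.succ) ∈ S σ ∧ y 0 ∈ Set.Icc 0 (y i.succ)}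

def U (σ : Equiv.Perm (Fin m)) (i : Fin m) : Set (Fin (m + 1) → ℝ) :=
  ⋃ (j₀ : Fin m) (_ : j₀ ≤ σ.symm i), S (ins σ j₀.castSucc)

lemma R_subset_U (σ : Equiv.Perm (Fin m)) (i : Fin m) : R σ i ⊆ U σ i := by
  rintro y ⟨⟨hc, hm⟩, h0, hi⟩
  have hgi : y (σ (σ.symm i)).succ = y i.succ := by rw [Equiv.apply_symm_apply]
  set g : Fin m → ℝ := fun t => y (σ t).succ with hg
  have hgm : Monotone g := hm
  have hF : (Finset.univ.filter (fun t : Fin m => y 0 ≤ g t)).Nonempty :=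
    ⟨σ.symm i, by simp [hg, hgi, le_of_lt hi]⟩
  set j₀ := (Finset.univ.filter (fun t : Fin m => y 0 ≤ g t)).min' hF with hj₀
  have hj₀mem : y 0 ≤ g j₀ := by
    have := Finset.min'_mem _ hF
    simpa using (Finset.mem_filter.1 this).2
  have hj₀min : ∀ t, t < j₀ → ¬ (y 0 ≤ g t) := by
    intro t ht hle
    exact absurd (Finset.min'_le _ t (by simpa using hle)) (not_le.2 ht)
  have hj₀k : j₀ ≤ σ.symm i := Finset.min'_le _ _ (by simp [hg, hgi, le_of_lt hi])
  refine Set.mem_iUnion.2 ⟨j₀, Set.mem_iUnion.2 ⟨hj₀k, ?_⟩⟩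
  rw [mem_S_ins]
  refine ⟨?_, hgm, fun t ht => le_of_lt (not_le.1 (hj₀min t ht)), fun t ht => le_trans hj₀mem (hgm ht)⟩
  · intro l
    rcases Fin.eq_zero_or_eq_succ l with rfl | ⟨t, rfl⟩
    · constructor
      · exact le_of_lt h0
      · exact le_trans (le_of_lt hi) (hc i).2
    · exact hc t

lemma U_subset_Rbar (σ : Equiv.Perm (Fin m)) (i : Fin m) : U σ i ⊆ Rbar σ i := by
  rintro y hy
  obtain ⟨_, ⟨j₀, rfl⟩, hy2⟩ := hy
  obtain ⟨_, ⟨hj₀, rfl⟩, hy3⟩ := hy2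
  rw [mem_S_ins] at hy3
  obtain ⟨hc, hm, hlt, hge⟩ := hy3
  refine ⟨⟨fun t => hc t.succ, hm⟩, (hc 0).1, ?_⟩
  have := hge (σ.symm i) hj₀
  rwa [Equiv.apply_symm_apply] at this

lemma vol_U (σ : Equiv.Perm (Fin m)) (i : Fin m) :
    volume (U σ i) = (((σ.symm i : ℕ) : ℝ≥0∞) + 1) * (((m + 1).factorial : ℝ≥0∞))⁻¹ := by
  have : U σ i = ⋃ j₀ ∈ Finset.Iic (σ.symm i), S (ins σ j₀.castSucc) := by
    simp [U, Finset.mem_Iic]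
  rw [this, measure_biUnion_finset₀]
  · rw [Finset.sum_congr rfl (fun j _ => vol_S _), Finset.sum_const, Fin.card_Iic, nsmul_eq_mul]
    push_cast
    ring
  · intro a _ b _ hab
    exact aedisjoint_S (fun h => hab (Fin.castSucc_injective m (ins_injective σ h)))
  · exact fun j _ => (measurableSet_S _).nullMeasurableSet

lemma Rbar_diff_R (σ : Equiv.Perm (Fin m)) (i : Fin m) :
    Rbar σ i \ R σ i ⊆ {y : Fin (m + 1) → ℝ | y 0 = 0} ∪
      {y : Fin (m + 1) → ℝ | y 0 = y i.succ} := by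
  rintro y ⟨⟨hS, h0, hi⟩, hnot⟩
  by_cases hz : y 0 = 0
  · exact Or.inl hz
  right
  rcases eq_or_lt_of_le hi with h | h
  · exact h
  · exact absurd ⟨hS, lt_of_le_of_ne h0 (Ne.symm hz), h⟩ hnot

lemma vol_R (σ : Equiv.Perm (Fin m)) (i : Fin m) :
    volume (R σ i) = (((σ.symm i : ℕ) : ℝ≥0∞) + 1) * (((m + 1).factorial : ℝ≥0∞))⁻¹ := by
  have hnull : volume ({y : Fin (m + 1) → ℝ | y 0 = 0} ∪
      {y : Fin (m + 1) → ℝ | y 0 = y i.succ}) = 0 := by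
    rw [measure_union_null_iff]
    exact ⟨null_zero 0, null_pair (by simp [Fin.succ_ne_zero, (Fin.succ_ne_zero i).symm])⟩
  have h1 : volume (Rbar σ i) ≤ volume (R σ i) := by
    calc volume (Rbar σ i) ≤ volume (R σ i ∪ (Rbar σ i \ R σ i)) :=
          measure_mono (by intro y hy; by_cases h : y ∈ R σ i; exact Or.inl h; exact Or.inr ⟨hy, h⟩)
      _ ≤ volume (R σ i) + volume (Rbar σ i \ R σ i) := measure_union_le _ _
      _ ≤ volume (R σ i) + 0 := by
          gcongr
          exact le_of_eq (measure_mono_null (Rbar_diff_R σ i) hnull)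
      _ = volume (R σ i) := by rw [add_zero]
  have h2 : volume (R σ i) ≤ volume (U σ i) := measure_mono (R_subset_U σ i)
  have h3 : volume (U σ i) ≤ volume (Rbar σ i) := measure_mono (U_subset_Rbar σ i)
  rw [← vol_U σ i]
  exact le_antisymm (le_trans h2 (le_refl _)) (le_trans h3 h1)

end EVH

namespace EVH

lemma integrableOn_coord (i : Fin m) {s : Set (Fin m → ℝ)}
    (hsub : ∀ x ∈ s, ∀ j, x j ∈ Set.Icc (0:ℝ) 1) (hs : MeasurableSet s) :
    IntegrableOn (fun x => x i) s volume := by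
  have hvol : volume s ≠ ∞ := by
    have h1 : s ⊆ Set.pi Set.univ (fun _ : Fin m => Set.Icc (0:ℝ) 1) := by
      intro x hx j _; exact hsub x hx j
    have h2 : volume s ≤ 1 := by
      have := measure_mono (μ := (volume : Measure (Fin m → ℝ))) h1
      rwa [show volume (Set.pi Set.univ (fun _ : Fin m => Set.Icc (0:ℝ) 1)) = 1 by
        rw [volume_pi_pi]; simp [Real.volume_Icc]] at this
    exact (lt_of_le_of_lt h2 ENNReal.one_lt_top).ne
  refine Measure.integrableOn_of_bounded (M := 1) hvol
    ((measurable_pi_apply i).aestronglyMeasurable) ?_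
  rw [ae_restrict_iff' hs]
  refine Filter.Eventually.of_forall fun x hx => ?_
  have := hsub x hx i
  rw [Real.norm_eq_abs, abs_le]
  exact ⟨le_trans (by norm_num) this.1, this.2⟩

lemma setIntegral_coord_S (σ : Equiv.Perm (Fin m)) (i : Fin m) :
    ∫ x in S σ, x i = (((σ.symm i : ℕ) : ℝ) + 1) / ((m + 1) * m.factorial) := by
  have hint : IntegrableOn (fun x : Fin m → ℝ => x i) (S σ) volume :=
    integrableOn_coord i (fun x hx => hx.1) (measurableSet_S σ)
  have h0 : IntegrableOn (fun _ : Fin m → ℝ => (0:ℝ)) (S σ) volume :=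
    (integrable_zero _ _ _).integrableOn
  have hreg := volume_regionBetween_eq_integral h0 hint (measurableSet_S σ)
    (fun x hx => (hx.1 i).1)
  -- identify the region with R σ i via a measure preserving equivalence
  set E : (Fin (m + 1) → ℝ) ≃ᵐ (Fin m → ℝ) × ℝ :=
    (MeasurableEquiv.piFinSuccAbove (fun _ : Fin (m + 1) => ℝ) 0).trans
      (MeasurableEquiv.prodComm : ℝ × (Fin m → ℝ) ≃ᵐ (Fin m → ℝ) × ℝ) with hE_def
  have hE : MeasurePreserving E volume (volume.prod volume) := by
    have h1 := MeasureTheory.volume_preserving_piFinSuccAbove (fun _ : Fin (m + 1) => ℝ) 0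
    have h2 : MeasurePreserving
        (MeasurableEquiv.prodComm : ℝ × (Fin m → ℝ) ≃ᵐ (Fin m → ℝ) × ℝ) volume
        (volume.prod volume) := by
      have := MeasureTheory.Measure.measurePreserving_swap (μ := (volume : Measure ℝ))
        (ν := (volume : Measure (Fin m → ℝ)))
      rw [← Measure.volume_eq_prod] at this
      exact this
    exact h2.comp h1
  have hpre : E ⁻¹' (regionBetween (fun _ => (0:ℝ)) (fun x => x i) (S σ)) = R σ i := by
    ext y
    have hEy : E y = ((fun t : Fin m => y t.succ), y 0) := by
      rfl
    simp only [Set.mem_preimage, hEy, regionBetween, Set.mem_setOf_eq, R]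
  have hvolR := hE.measure_preimage
    (s := regionBetween (fun _ : Fin m → ℝ => (0:ℝ)) (fun x => x i) (S σ))
    ((measurableSet_regionBetween measurable_const (measurable_pi_apply i)
      (measurableSet_S σ)).nullMeasurableSet)
  rw [hpre] at hvolR
  have key : ENNReal.ofReal (∫ x in S σ, x i) =
      (((σ.symm i : ℕ) : ℝ≥0∞) + 1) * (((m + 1).factorial : ℝ≥0∞))⁻¹ := by
    rw [← vol_R σ i, hvolR, hreg]
    congr 1
    simp
  have hnonneg : 0 ≤ ∫ x in S σ, x i :=
    setIntegral_nonneg (measurableSet_S σ) (fun x hx => (hx.1 i).1)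
  have := congrArg ENNReal.toReal key
  rw [ENNReal.toReal_ofReal hnonneg] at this
  rw [this, Nat.factorial_succ]
  simp [ENNReal.toReal_mul, ENNReal.toReal_inv, div_eq_mul_inv, ENNReal.toReal_add,
    ENNReal.natCast_ne_top, ENNReal.one_ne_top]

end EVH

open EVH in
theorem expected_value_eq_expected_rank_div (n : ℕ) (C : Finset (Fin n × Fin n)) (i : Fin n)
    (hanti : ∀ a b : Fin n, Relation.ReflTransGen (fun a b => (a, b) ∈ C) a b →
      Relation.ReflTransGen (fun a b => (a, b) ∈ C) b a → a = b)
    (N r : ℝ)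
    (hN : N = Fintype.card {σ : Equiv.Perm (Fin n) // ∀ p ∈ C, σ.symm p.1 ≤ σ.symm p.2})
    (hr : r = (1 / N) * ∑ σ : {σ : Equiv.Perm (Fin n) // ∀ p ∈ C, σ.symm p.1 ≤ σ.symm p.2},
      (((σ : Equiv.Perm (Fin n)).symm i : ℕ) + 1 : ℝ)) :
    (∫ x in {x : Fin n → ℝ | (∀ j, x j ∈ Set.Icc (0:ℝ) 1) ∧ ∀ p ∈ C, x p.1 ≤ x p.2}, x i) /
      (volume {x : Fin n → ℝ | (∀ j, x j ∈ Set.Icc (0:ℝ) 1) ∧ ∀ p ∈ C, x p.1 ≤ x p.2}).toReal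
      = r / (n + 1) := by
  classical
  set Adm := {σ : Equiv.Perm (Fin n) // ∀ p ∈ C, σ.symm p.1 ≤ σ.symm p.2} with hAdm
  set P := {x : Fin n → ℝ | (∀ j, x j ∈ Set.Icc (0:ℝ) 1) ∧ ∀ p ∈ C, x p.1 ≤ x p.2} with hP
  set Uu := ⋃ σ : Adm, S (σ : Equiv.Perm (Fin n)) with hUu
  have hPmeas : MeasurableSet P := by
    have h1 : MeasurableSet {x : Fin n → ℝ | ∀ j, x j ∈ Set.Icc (0:ℝ) 1} := by
      rw [show {x : Fin n → ℝ | ∀ j, x j ∈ Set.Icc (0:ℝ) 1}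
          = ⋂ j, (fun x => x j) ⁻¹' Set.Icc 0 1 by ext x; simp]
      exact MeasurableSet.iInter fun j => (measurable_pi_apply j) measurableSet_Icc
    have h2 : MeasurableSet {x : Fin n → ℝ | ∀ p ∈ C, x p.1 ≤ x p.2} := by
      rw [show {x : Fin n → ℝ | ∀ p ∈ C, x p.1 ≤ x p.2}
          = ⋂ (p) (_ : p ∈ C), {x : Fin n → ℝ | x p.1 ≤ x p.2} by ext x; simp]
      exact MeasurableSet.iInter fun p => MeasurableSet.iInter fun _ =>
        measurableSet_le (measurable_pi_apply _) (measurable_pi_apply _)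
    exact h1.inter h2
  have hUP : Uu ⊆ P := by
    rintro x hx
    obtain ⟨_, ⟨σ, rfl⟩, hc, hm⟩ := hx
    refine ⟨hc, fun p hp => ?_⟩
    have := hm (σ.2 p hp)
    simpa using this
  have hPU : P \ Ties n ⊆ Uu := by
    rintro x ⟨⟨hc, hcons⟩, hx⟩
    have hinj : Function.Injective x := by
      intro a b hab
      by_contra hne
      exact hx (Set.mem_iUnion.2 ⟨a, Set.mem_iUnion.2 ⟨b, Set.mem_iUnion.2 ⟨hne, hab⟩⟩⟩)
    set σ := Tuple.sort x with hσ
    have hmono : Monotone (x ∘ σ) := Tuple.monotone_sort x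
    have hsm : StrictMono (x ∘ σ) := hmono.strictMono_of_injective (hinj.comp σ.injective)
    have hadm : ∀ p ∈ C, σ.symm p.1 ≤ σ.symm p.2 := by
      intro p hp
      have h1 : (x ∘ σ) (σ.symm p.1) ≤ (x ∘ σ) (σ.symm p.2) := by
        simpa using hcons p hp
      exact hsm.le_iff_le.1 h1
    exact Set.mem_iUnion.2 ⟨⟨σ, hadm⟩, hc, hmono⟩
  have haeeq : P =ᵐ[volume] Uu := by
    rw [MeasureTheory.ae_eq_set]
    constructor
    · refine measure_mono_null ?_ (null_Ties (m := n))
      intro x hx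
      by_contra hxT
      exact hx.2 (hPU ⟨hx.1, hxT⟩)
    · rw [Set.diff_eq_empty.2 hUP]
      exact measure_empty
  have hd : Pairwise (Function.onFun (AEDisjoint volume) fun σ : Adm => S (σ : Equiv.Perm (Fin n))) := by
    intro a b hab
    exact aedisjoint_S (fun h => hab (Subtype.ext h))
  have hm : ∀ σ : Adm, NullMeasurableSet (S (σ : Equiv.Perm (Fin n))) volume :=
    fun σ => (measurableSet_S _).nullMeasurableSet
  -- volume of P
  have hvolU : volume Uu = (Fintype.card Adm : ℝ≥0∞) * ((n.factorial : ℝ≥0∞))⁻¹ := by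
    rw [hUu, measure_iUnion₀ hd hm, tsum_fintype]
    rw [Finset.sum_congr rfl (fun σ _ => vol_S _), Finset.sum_const, Finset.card_univ,
      nsmul_eq_mul]
  have hvolP : (volume P).toReal = N * ((n.factorial : ℝ))⁻¹ := by
    rw [measure_congr haeeq, hvolU, ENNReal.toReal_mul, ENNReal.toReal_inv, hN,
      ENNReal.toReal_natCast, ENNReal.toReal_natCast]
  -- integral over P
  have hintU : IntegrableOn (fun x => x i) Uu volume := by
    refine integrableOn_coord i ?_ ?_
    · intro x hx
      exact (hUP hx).1
    · exact MeasurableSet.iUnion fun σ => measurableSet_S _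
  have hintP : ∫ x in P, x i = ∑ σ : Adm,
      ((((σ : Equiv.Perm (Fin n)).symm i : ℕ) : ℝ) + 1) / ((n + 1) * n.factorial) := by
    rw [setIntegral_congr_set haeeq, hUu, integral_iUnion_ae hm hd (hUu ▸ hintU), tsum_fintype]
    exact Finset.sum_congr rfl fun σ _ => setIntegral_coord_S _ i
  rw [hintP, hvolP]
  have hfac : ((n.factorial : ℝ)) ≠ 0 := Nat.cast_ne_zero.2 n.factorial_ne_zero
  have hn1 : ((n : ℝ) + 1) ≠ 0 := by positivity
  rw [← Finset.sum_div]
  by_cases hN0 : N = 0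
  · have hcard : Fintype.card Adm = 0 := by
      rw [hN0] at hN
      exact_mod_cast hN.symm
    have hempty : IsEmpty Adm := Fintype.card_eq_zero_iff.1 hcard
    have hsum0 : ∑ σ : Adm, ((((σ : Equiv.Perm (Fin n)).symm i : ℕ) : ℝ) + 1) = 0 := by
      rw [Finset.univ_eq_empty, Finset.sum_empty]
    rw [hsum0, hr, hN0]
    simp
  · rw [hr]
    field_simp
    ring
end

section
/- Counterexample to containment for U-top-k: consider variables x_l ≤ x_h with x_l, x_h uniform on the triangle {0 ≤ x_l ≤ x_h ≤ 1}, and constants x_f⁺ = 0.7, x_f⁻ = 0.69. Then P(x_h is the maximum) = 0.51 > 0.49 = P(x_f⁺ is the maximum), so the most likely top-1 is (x_h); but P((x_f⁺, x_f⁻) is the top-2 sequence) = 0.4761, which exceeds the probability of every top-2 sequence beginning with x_h (namely P((x_h,x_f⁺)) = 0.42 and P((x_h,x_l)) = 0.09). -/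
open MeasureTheory Set ENNReal

lemma slice_vol (S : Set (ℝ × ℝ)) (hS : MeasurableSet S) {s : Set ℝ} (hs : MeasurableSet s)
    (f : ℝ → ℝ≥0∞) (h : ∀ x, volume {y | (x, y) ∈ S} = s.indicator f x) :
    volume S = ∫⁻ x in s, f x := by
  rw [Measure.volume_eq_prod, Measure.prod_apply hS]
  simp only [show ∀ x : ℝ, Prod.mk x ⁻¹' S = {y | (x, y) ∈ S} from fun _ => rfl, h]
  rw [lintegral_indicator hs]

lemma lint_ofReal {s : Set ℝ} (hs : MeasurableSet s) {g : ℝ → ℝ}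
    (hint : IntegrableOn g s) (hnn : ∀ x ∈ s, 0 ≤ g x) :
    ∫⁻ x in s, ENNReal.ofReal (g x) = ENNReal.ofReal (∫ x in s, g x) :=
  (ofReal_integral_eq_lintegral_ofReal hint
    ((ae_restrict_iff' hs).2 (ae_of_all _ hnn))).symm

lemma intlin (a b c : ℝ) : ∫ x in a..b, (c - x) = c*(b-a) - (b^2-a^2)/2 := by
  rw [intervalIntegral.integral_sub intervalIntegrable_const
    intervalIntegral.intervalIntegrable_id, integral_id, intervalIntegral.integral_const]
  simp only [smul_eq_mul]; ring

lemma intlin' (a b c : ℝ) (hab : a ≤ b) :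
    ∫ x in Icc a b, (c - x) = c*(b-a) - (b^2-a^2)/2 := by
  rw [integral_Icc_eq_integral_Ioc, ← intervalIntegral.integral_of_le hab, intlin]

lemma int2 : ∫ x in Icc (0:ℝ) 1, (1 - max x (7/10)) = 51/200 := by
  rw [integral_Icc_eq_integral_Ioc, ← intervalIntegral.integral_of_le (by norm_num : (0:ℝ) ≤ 1)]
  have hc : Continuous fun x : ℝ => 1 - max x (7/10) :=
    continuous_const.sub (continuous_id.max continuous_const)
  rw [← intervalIntegral.integral_add_adjacent_intervals (a := (0:ℝ)) (b := 7/10) (c := 1)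
    (hc.intervalIntegrable _ _) (hc.intervalIntegrable _ _)]
  have e1 : ∫ x in (0:ℝ)..(7/10), (1 - max x (7/10)) = ∫ _x in (0:ℝ)..(7/10), (3/10:ℝ) := by
    refine intervalIntegral.integral_congr fun x hx => ?_
    rw [uIcc_of_le (by norm_num)] at hx
    rw [max_eq_right hx.2]; norm_num
  have e2 : ∫ x in (7/10:ℝ)..1, (1 - max x (7/10)) = ∫ x in (7/10:ℝ)..1, (1 - x) := by
    refine intervalIntegral.integral_congr fun x hx => ?_
    rw [uIcc_of_le (by norm_num)] at hx
    rw [max_eq_left hx.1]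
  rw [e1, e2, intlin, intervalIntegral.integral_const]
  norm_num

theorem u_topk_containment_counterexample :
    -- x_h is the most likely top-1 ...
    (volume ({p : ℝ × ℝ | 0 ≤ p.1 ∧ p.1 ≤ p.2 ∧ p.2 ≤ 1} ∩
        {p : ℝ × ℝ | max p.1 (max (7/10) (69/100)) < p.2})).toReal /
      (volume {p : ℝ × ℝ | 0 ≤ p.1 ∧ p.1 ≤ p.2 ∧ p.2 ≤ 1}).toReal = 51/100 ∧
    (volume ({p : ℝ × ℝ | 0 ≤ p.1 ∧ p.1 ≤ p.2 ∧ p.2 ≤ 1} ∩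
        {p : ℝ × ℝ | max p.1 (max p.2 (69/100)) < 7/10})).toReal /
      (volume {p : ℝ × ℝ | 0 ≤ p.1 ∧ p.1 ≤ p.2 ∧ p.2 ≤ 1}).toReal = 49/100 ∧
    (49/100 : ℝ) < 51/100 ∧
    -- ... but the most likely top-2 sequence is (x_f⁺, x_f⁻), not starting with x_h
    (volume ({p : ℝ × ℝ | 0 ≤ p.1 ∧ p.1 ≤ p.2 ∧ p.2 ≤ 1} ∩
        {p : ℝ × ℝ | max p.1 p.2 < 69/100})).toReal /
      (volume {p : ℝ × ℝ | 0 ≤ p.1 ∧ p.1 ≤ p.2 ∧ p.2 ≤ 1}).toReal = 4761/10000 ∧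
    (volume ({p : ℝ × ℝ | 0 ≤ p.1 ∧ p.1 ≤ p.2 ∧ p.2 ≤ 1} ∩
        {p : ℝ × ℝ | max p.1 (7/10) < p.2 ∧ p.1 < 7/10})).toReal /
      (volume {p : ℝ × ℝ | 0 ≤ p.1 ∧ p.1 ≤ p.2 ∧ p.2 ≤ 1}).toReal = 42/100 ∧
    (volume ({p : ℝ × ℝ | 0 ≤ p.1 ∧ p.1 ≤ p.2 ∧ p.2 ≤ 1} ∩
        {p : ℝ × ℝ | max p.1 (7/10) < p.2 ∧ 7/10 < p.1})).toReal /
      (volume {p : ℝ × ℝ | 0 ≤ p.1 ∧ p.1 ≤ p.2 ∧ p.2 ≤ 1}).toReal = 9/100 ∧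
    (42/100 : ℝ) < 4761/10000 ∧ (9/100 : ℝ) < 4761/10000 := by
  -- volume of the triangle T
  have hTm : MeasurableSet {p : ℝ × ℝ | 0 ≤ p.1 ∧ p.1 ≤ p.2 ∧ p.2 ≤ 1} := by
    apply MeasurableSet.inter (measurableSet_le measurable_const measurable_fst)
    exact (measurableSet_le measurable_fst measurable_snd).inter
      (measurableSet_le measurable_snd measurable_const)
  have hT : volume {p : ℝ × ℝ | 0 ≤ p.1 ∧ p.1 ≤ p.2 ∧ p.2 ≤ 1} = ENNReal.ofReal (1/2) := by
    have h1 : volume {p : ℝ × ℝ | 0 ≤ p.1 ∧ p.1 ≤ p.2 ∧ p.2 ≤ 1}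
        = ∫⁻ x in Icc (0:ℝ) 1, ENNReal.ofReal (1 - x) := by
      refine slice_vol _ hTm measurableSet_Icc _ ?_
      intro x
      by_cases hx : x ∈ Icc (0:ℝ) 1
      · rw [indicator_of_mem hx, show {y | (x, y) ∈ {p : ℝ × ℝ | 0 ≤ p.1 ∧ p.1 ≤ p.2 ∧ p.2 ≤ 1}}
            = Icc x 1 from ?_, Real.volume_Icc]
        ext y; simp only [mem_setOf_eq, mem_Icc]
        exact ⟨fun h => ⟨h.2.1, h.2.2⟩, fun h => ⟨hx.1, h.1, h.2⟩⟩
      · rw [indicator_of_notMem hx, show {y | (x, y) ∈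
            {p : ℝ × ℝ | 0 ≤ p.1 ∧ p.1 ≤ p.2 ∧ p.2 ≤ 1}} = (∅ : Set ℝ) from ?_, measure_empty]
        ext y; simp only [mem_setOf_eq, mem_empty_iff_false, iff_false]
        rw [mem_Icc, not_and_or] at hx; push_neg at hx
        rintro ⟨h0, h1, h2⟩
        rcases hx with h | h <;> linarith
    rw [h1, lint_ofReal measurableSet_Icc
        ((by fun_prop : Continuous fun x : ℝ => 1 - x).integrableOn_Icc)
        (fun x hx => by rw [mem_Icc] at hx; linarith [hx.2]),
      intlin' 0 1 1 (by norm_num)]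
    norm_num
  -- set 1
  have h1vol : volume ({p : ℝ × ℝ | 0 ≤ p.1 ∧ p.1 ≤ p.2 ∧ p.2 ≤ 1} ∩
      {p : ℝ × ℝ | max p.1 (max (7/10) (69/100)) < p.2}) = ENNReal.ofReal (51/200) := by
    have hm : MeasurableSet ({p : ℝ × ℝ | 0 ≤ p.1 ∧ p.1 ≤ p.2 ∧ p.2 ≤ 1} ∩
        {p : ℝ × ℝ | max p.1 (max (7/10) (69/100)) < p.2}) :=
      hTm.inter (measurableSet_lt (measurable_fst.max measurable_const) measurable_snd)
    have hs : volume ({p : ℝ × ℝ | 0 ≤ p.1 ∧ p.1 ≤ p.2 ∧ p.2 ≤ 1} ∩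
          {p : ℝ × ℝ | max p.1 (max (7/10) (69/100)) < p.2})
        = ∫⁻ x in Icc (0:ℝ) 1, ENNReal.ofReal (1 - max x (7/10)) := by
      refine slice_vol _ hm measurableSet_Icc _ ?_
      have hmm : max (7/10:ℝ) (69/100) = 7/10 := by norm_num
      intro x
      by_cases hx : x ∈ Icc (0:ℝ) 1
      · rw [indicator_of_mem hx, show {y | (x, y) ∈ _} = Ioc (max x (7/10)) 1 from ?_,
          Real.volume_Ioc]
        ext y
        simp only [mem_setOf_eq, mem_inter_iff, mem_Ioc]
        constructor
        · rintro ⟨⟨h0, h1, h2⟩, h3⟩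
          rw [hmm] at h3
          exact ⟨h3, h2⟩
        · rintro ⟨h3, h2⟩
          refine ⟨⟨hx.1, le_trans (le_max_left _ _) h3.le, h2⟩, ?_⟩
          rw [hmm]; exact h3
      · rw [indicator_of_notMem hx, show {y | (x, y) ∈ _} = (∅ : Set ℝ) from ?_, measure_empty]
        ext y
        simp only [mem_setOf_eq, mem_inter_iff, mem_empty_iff_false, iff_false]
        rw [mem_Icc, not_and_or] at hx; push_neg at hx
        rintro ⟨⟨h0, h1, h2⟩, h3⟩
        rcases hx with h | h <;> linarith
    have hcont : IntegrableOn (fun x : ℝ => 1 - max x (7/10)) (Icc 0 1) :=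
      (continuous_const.sub (continuous_id.max continuous_const)).integrableOn_Icc
    rw [hs, lint_ofReal measurableSet_Icc hcont
        (fun x hx => by
          rw [mem_Icc] at hx
          have := max_le hx.2 (by norm_num : (7/10:ℝ) ≤ 1)
          linarith), int2]
  -- set 2
  have h2vol : volume ({p : ℝ × ℝ | 0 ≤ p.1 ∧ p.1 ≤ p.2 ∧ p.2 ≤ 1} ∩
      {p : ℝ × ℝ | max p.1 (max p.2 (69/100)) < 7/10}) = ENNReal.ofReal (49/200) := by
    have hm : MeasurableSet ({p : ℝ × ℝ | 0 ≤ p.1 ∧ p.1 ≤ p.2 ∧ p.2 ≤ 1} ∩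
        {p : ℝ × ℝ | max p.1 (max p.2 (69/100)) < 7/10}) :=
      hTm.inter (measurableSet_lt (measurable_fst.max (measurable_snd.max measurable_const))
        measurable_const)
    have hs : volume ({p : ℝ × ℝ | 0 ≤ p.1 ∧ p.1 ≤ p.2 ∧ p.2 ≤ 1} ∩
          {p : ℝ × ℝ | max p.1 (max p.2 (69/100)) < 7/10})
        = ∫⁻ x in Icc (0:ℝ) (7/10), ENNReal.ofReal (7/10 - x) := by
      refine slice_vol _ hm measurableSet_Icc _ ?_
      intro x
      by_cases hx : x ∈ Icc (0:ℝ) (7/10)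
      · rw [indicator_of_mem hx, show {y | (x, y) ∈ _} = Ico x (7/10) from ?_, Real.volume_Ico]
        ext y
        simp only [mem_setOf_eq, mem_inter_iff, mem_Ico]
        constructor
        · rintro ⟨⟨h0, h1, h2⟩, h3⟩
          have h4 := max_lt_iff.1 h3
          have h5 := max_lt_iff.1 h4.2
          exact ⟨h1, h5.1⟩
        · rintro ⟨h1, h7⟩
          exact ⟨⟨hx.1, h1, by linarith⟩,
            max_lt (by linarith) (max_lt h7 (by norm_num))⟩
      · rw [indicator_of_notMem hx, show {y | (x, y) ∈ _} = (∅ : Set ℝ) from ?_, measure_empty]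
        ext y
        simp only [mem_setOf_eq, mem_inter_iff, mem_empty_iff_false, iff_false]
        rw [mem_Icc, not_and_or] at hx; push_neg at hx
        rintro ⟨⟨h0, h1, h2⟩, h3⟩
        have h4 := max_lt_iff.1 h3
        rcases hx with h | h <;> linarith [h4.1]
    rw [hs, lint_ofReal measurableSet_Icc
        ((by fun_prop : Continuous fun x : ℝ => 7/10 - x).integrableOn_Icc)
        (fun x hx => by rw [mem_Icc] at hx; linarith [hx.2]),
      intlin' 0 (7/10) (7/10) (by norm_num)]
    norm_num
  -- set 4
  have h4vol : volume ({p : ℝ × ℝ | 0 ≤ p.1 ∧ p.1 ≤ p.2 ∧ p.2 ≤ 1} ∩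
      {p : ℝ × ℝ | max p.1 p.2 < 69/100}) = ENNReal.ofReal (4761/20000) := by
    have hm : MeasurableSet ({p : ℝ × ℝ | 0 ≤ p.1 ∧ p.1 ≤ p.2 ∧ p.2 ≤ 1} ∩
        {p : ℝ × ℝ | max p.1 p.2 < 69/100}) :=
      hTm.inter (measurableSet_lt (measurable_fst.max measurable_snd) measurable_const)
    have hs : volume ({p : ℝ × ℝ | 0 ≤ p.1 ∧ p.1 ≤ p.2 ∧ p.2 ≤ 1} ∩
          {p : ℝ × ℝ | max p.1 p.2 < 69/100})
        = ∫⁻ x in Icc (0:ℝ) (69/100), ENNReal.ofReal (69/100 - x) := by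
      refine slice_vol _ hm measurableSet_Icc _ ?_
      intro x
      by_cases hx : x ∈ Icc (0:ℝ) (69/100)
      · rw [indicator_of_mem hx, show {y | (x, y) ∈ _} = Ico x (69/100) from ?_, Real.volume_Ico]
        ext y
        simp only [mem_setOf_eq, mem_inter_iff, mem_Ico]
        constructor
        · rintro ⟨⟨h0, h1, h2⟩, h3⟩
          have h4 := max_lt_iff.1 h3
          exact ⟨h1, h4.2⟩
        · rintro ⟨h1, h7⟩
          exact ⟨⟨hx.1, h1, by linarith⟩, max_lt (by linarith) h7⟩
      · rw [indicator_of_notMem hx, show {y | (x, y) ∈ _} = (∅ : Set ℝ) from ?_, measure_empty]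
        ext y
        simp only [mem_setOf_eq, mem_inter_iff, mem_empty_iff_false, iff_false]
        rw [mem_Icc, not_and_or] at hx; push_neg at hx
        rintro ⟨⟨h0, h1, h2⟩, h3⟩
        have h4 := max_lt_iff.1 h3
        rcases hx with h | h <;> linarith [h4.1]
    rw [hs, lint_ofReal measurableSet_Icc
        ((by fun_prop : Continuous fun x : ℝ => 69/100 - x).integrableOn_Icc)
        (fun x hx => by rw [mem_Icc] at hx; linarith [hx.2]),
      intlin' 0 (69/100) (69/100) (by norm_num)]
    norm_num
  -- set 5
  have h5vol : volume ({p : ℝ × ℝ | 0 ≤ p.1 ∧ p.1 ≤ p.2 ∧ p.2 ≤ 1} ∩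
      {p : ℝ × ℝ | max p.1 (7/10) < p.2 ∧ p.1 < 7/10}) = ENNReal.ofReal (21/100) := by
    have hm : MeasurableSet ({p : ℝ × ℝ | 0 ≤ p.1 ∧ p.1 ≤ p.2 ∧ p.2 ≤ 1} ∩
        {p : ℝ × ℝ | max p.1 (7/10) < p.2 ∧ p.1 < 7/10}) :=
      hTm.inter ((measurableSet_lt (measurable_fst.max measurable_const) measurable_snd).inter
        (measurableSet_lt measurable_fst measurable_const))
    have hs : volume ({p : ℝ × ℝ | 0 ≤ p.1 ∧ p.1 ≤ p.2 ∧ p.2 ≤ 1} ∩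
          {p : ℝ × ℝ | max p.1 (7/10) < p.2 ∧ p.1 < 7/10})
        = ∫⁻ _x in Ico (0:ℝ) (7/10), ENNReal.ofReal (3/10) := by
      refine slice_vol _ hm measurableSet_Ico _ ?_
      intro x
      by_cases hx : x ∈ Ico (0:ℝ) (7/10)
      · rw [indicator_of_mem hx, show {y | (x, y) ∈ _} = Ioc (7/10:ℝ) 1 from ?_, Real.volume_Ioc]
        · norm_num
        ext y
        simp only [mem_setOf_eq, mem_inter_iff, mem_Ioc]
        constructor
        · rintro ⟨⟨h0, h1, h2⟩, h3, h4⟩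
          exact ⟨lt_of_le_of_lt (le_max_right _ _) h3, h2⟩
        · rintro ⟨h7, h2⟩
          exact ⟨⟨hx.1, by linarith [hx.2], h2⟩, max_lt (by linarith [hx.2]) h7, hx.2⟩
      · rw [indicator_of_notMem hx, show {y | (x, y) ∈ _} = (∅ : Set ℝ) from ?_, measure_empty]
        ext y
        simp only [mem_setOf_eq, mem_inter_iff, mem_empty_iff_false, iff_false]
        rw [mem_Ico, not_and_or] at hx; push_neg at hx
        rintro ⟨⟨h0, h1, h2⟩, h3, h4⟩
        rcases hx with h | h <;> linarith
    rw [hs, setLIntegral_const, Real.volume_Ico, ← ENNReal.ofReal_mul (by norm_num)]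
    norm_num
  -- set 6
  have h6vol : volume ({p : ℝ × ℝ | 0 ≤ p.1 ∧ p.1 ≤ p.2 ∧ p.2 ≤ 1} ∩
      {p : ℝ × ℝ | max p.1 (7/10) < p.2 ∧ 7/10 < p.1}) = ENNReal.ofReal (9/200) := by
    have hm : MeasurableSet ({p : ℝ × ℝ | 0 ≤ p.1 ∧ p.1 ≤ p.2 ∧ p.2 ≤ 1} ∩
        {p : ℝ × ℝ | max p.1 (7/10) < p.2 ∧ 7/10 < p.1}) :=
      hTm.inter ((measurableSet_lt (measurable_fst.max measurable_const) measurable_snd).inter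
        (measurableSet_lt measurable_const measurable_fst))
    have hs : volume ({p : ℝ × ℝ | 0 ≤ p.1 ∧ p.1 ≤ p.2 ∧ p.2 ≤ 1} ∩
          {p : ℝ × ℝ | max p.1 (7/10) < p.2 ∧ 7/10 < p.1})
        = ∫⁻ x in Ioc (7/10:ℝ) 1, ENNReal.ofReal (1 - x) := by
      refine slice_vol _ hm measurableSet_Ioc _ ?_
      intro x
      by_cases hx : x ∈ Ioc (7/10:ℝ) 1
      · rw [indicator_of_mem hx, show {y | (x, y) ∈ _} = Ioc x 1 from ?_, Real.volume_Ioc]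
        ext y
        simp only [mem_setOf_eq, mem_inter_iff, mem_Ioc]
        constructor
        · rintro ⟨⟨h0, h1, h2⟩, h3, h4⟩
          exact ⟨lt_of_le_of_lt (le_max_left _ _) h3, h2⟩
        · rintro ⟨hxy, h2⟩
          exact ⟨⟨by linarith [hx.1], hxy.le, h2⟩,
            max_lt hxy (lt_trans hx.1 hxy), hx.1⟩
      · rw [indicator_of_notMem hx, show {y | (x, y) ∈ _} = (∅ : Set ℝ) from ?_, measure_empty]
        ext y
        simp only [mem_setOf_eq, mem_inter_iff, mem_empty_iff_false, iff_false]
        rw [mem_Ioc, not_and_or] at hx; push_neg at hx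
        rintro ⟨⟨h0, h1, h2⟩, h3, h4⟩
        rcases hx with h | h <;> linarith
    rw [hs, lint_ofReal measurableSet_Ioc
        (((by fun_prop : Continuous fun x : ℝ => 1 - x).integrableOn_Icc).mono_set
          Ioc_subset_Icc_self)
        (fun x hx => by rw [mem_Ioc] at hx; linarith [hx.2]),
      ← intervalIntegral.integral_of_le (by norm_num : (7/10:ℝ) ≤ 1), intlin]
    norm_num
  refine ⟨?_, ?_, by norm_num, ?_, ?_, ?_, by norm_num, by norm_num⟩ <;>
    rw [hT] <;>
    first
      | (rw [h1vol]; rw [ENNReal.toReal_ofReal (by norm_num), ENNReal.toReal_ofReal (by norm_num)]; norm_num)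
      | (rw [h2vol]; rw [ENNReal.toReal_ofReal (by norm_num), ENNReal.toReal_ofReal (by norm_num)]; norm_num)
      | (rw [h4vol]; rw [ENNReal.toReal_ofReal (by norm_num), ENNReal.toReal_ofReal (by norm_num)]; norm_num)
      | (rw [h5vol]; rw [ENNReal.toReal_ofReal (by norm_num), ENNReal.toReal_ofReal (by norm_num)]; norm_num)
      | (rw [h6vol]; rw [ENNReal.toReal_ofReal (by norm_num), ENNReal.toReal_ofReal (by norm_num)]; norm_num)
end

section
/- Non-stability of uniform interpolation on a tree: consider the constraint set on variables x_r, x_a, x_b, x_c, x_d, x_e with order constraints x_r ≤ x_a, x_a ≤ x_b ≤ x_c, x_a ≤ x_d ≤ x_e and exact values x_r = 0, x_c = 1/2, x_e = 1. Under the uniform distribution on the admissible polytope {(x_a,x_b,x_d) : 0 ≤ x_a, x_a ≤ x_b ≤ 1/2, x_a ≤ x_d ≤ 1}, the expected value of x_a is 3/20 and the expected value of x_b is 13/40; but if one additionally imposes x_b = 13/40, then the expected value of x_a under the uniform distribution on the new polytope is 611/4020, which differs from 3/20. -/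
open MeasureTheory Set

namespace UIP

noncomputable def S3 : Set (ℝ × ℝ × ℝ) :=
  {p : ℝ × ℝ × ℝ | 0 ≤ p.1 ∧ p.1 ≤ p.2.1 ∧ p.2.1 ≤ 1/2 ∧ p.1 ≤ p.2.2 ∧ p.2.2 ≤ 1}

noncomputable def S2 : Set (ℝ × ℝ) :=
  {q : ℝ × ℝ | 0 ≤ q.1 ∧ q.1 ≤ 13/40 ∧ q.1 ≤ q.2 ∧ q.2 ≤ 1}

lemma meas3 : MeasurableSet S3 := by
  unfold S3
  apply MeasurableSet.inter
  · exact measurableSet_le measurable_const measurable_fst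
  apply MeasurableSet.inter
  · exact measurableSet_le measurable_fst (measurable_fst.comp measurable_snd)
  apply MeasurableSet.inter
  · exact measurableSet_le (measurable_fst.comp measurable_snd) measurable_const
  apply MeasurableSet.inter
  · exact measurableSet_le measurable_fst (measurable_snd.comp measurable_snd)
  · exact measurableSet_le (measurable_snd.comp measurable_snd) measurable_const

lemma meas2 : MeasurableSet S2 := by
  unfold S2
  apply MeasurableSet.inter
  · exact measurableSet_le measurable_const measurable_fst
  apply MeasurableSet.inter
  · exact measurableSet_le measurable_fst measurable_const
  apply MeasurableSet.inter
  · exact measurableSet_le measurable_fst measurable_snd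
  · exact measurableSet_le measurable_snd measurable_const

lemma slice3_pos (a : ℝ) (ha : 0 ≤ a) :
    Prod.mk a ⁻¹' S3 = Icc a (1/2) ×ˢ Icc a 1 := by
  ext y
  simp only [S3, mem_preimage, mem_setOf_eq, mem_prod, mem_Icc]
  constructor
  · rintro ⟨_, h1, h2, h3, h4⟩; exact ⟨⟨h1, h2⟩, h3, h4⟩
  · rintro ⟨⟨h1, h2⟩, h3, h4⟩; exact ⟨ha, h1, h2, h3, h4⟩

lemma slice3_neg (a : ℝ) (ha : a < 0) : Prod.mk a ⁻¹' S3 = ∅ := by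
  ext y
  simp only [S3, mem_preimage, mem_setOf_eq, mem_empty_iff_false, iff_false]
  rintro ⟨h, -⟩; linarith

lemma slice2_pos (a : ℝ) (ha : 0 ≤ a) (ha' : a ≤ 13/40) :
    Prod.mk a ⁻¹' S2 = Icc a 1 := by
  ext y
  simp only [S2, mem_preimage, mem_setOf_eq, mem_Icc]
  exact ⟨fun ⟨_, _, h3, h4⟩ => ⟨h3, h4⟩, fun ⟨h3, h4⟩ => ⟨ha, ha', h3, h4⟩⟩

lemma slice2_neg (a : ℝ) (ha : a ∉ Icc (0:ℝ) (13/40)) : Prod.mk a ⁻¹' S2 = ∅ := by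
  ext y
  simp only [S2, mem_preimage, mem_setOf_eq, mem_empty_iff_false, iff_false]
  rintro ⟨h1, h2, -⟩
  exact ha ⟨h1, h2⟩

lemma compact3 : IsCompact S3 := by
  have hsub : S3 ⊆ Icc (0:ℝ) 1 ×ˢ (Icc (0:ℝ) 1 ×ˢ Icc (0:ℝ) 1) := by
    rintro ⟨a, b, d⟩ ⟨h0, h1, h2, h3, h4⟩
    refine ⟨⟨h0, by linarith⟩, ⟨by linarith, by linarith⟩, ⟨by linarith, h4⟩⟩
  have hclosed : IsClosed S3 := by
    unfold S3
    apply IsClosed.inter (isClosed_le continuous_const continuous_fst)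
    apply IsClosed.inter (isClosed_le continuous_fst (continuous_fst.comp continuous_snd))
    apply IsClosed.inter (isClosed_le (continuous_fst.comp continuous_snd) continuous_const)
    exact IsClosed.inter (isClosed_le continuous_fst (continuous_snd.comp continuous_snd))
      (isClosed_le (continuous_snd.comp continuous_snd) continuous_const)
  exact (isCompact_Icc.prod (isCompact_Icc.prod isCompact_Icc)).of_isClosed_subset hclosed hsub

lemma compact2 : IsCompact S2 := by
  have hsub : S2 ⊆ Icc (0:ℝ) 1 ×ˢ Icc (0:ℝ) 1 := by
    rintro ⟨a, d⟩ ⟨h0, h1, h2, h3⟩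
    exact ⟨⟨h0, by linarith⟩, ⟨by linarith, h3⟩⟩
  have hclosed : IsClosed S2 := by
    unfold S2
    apply IsClosed.inter (isClosed_le continuous_const continuous_fst)
    apply IsClosed.inter (isClosed_le continuous_fst continuous_const)
    exact IsClosed.inter (isClosed_le continuous_fst continuous_snd)
      (isClosed_le continuous_snd continuous_const)
  exact (isCompact_Icc.prod isCompact_Icc).of_isClosed_subset hclosed hsub

-- interval integral computations
lemma I1 : ∫ x in (0:ℝ)..(1/2), (1/2 - x) * (1 - x) = 5/48 := by
  have h : ∀ x ∈ uIcc (0:ℝ) (1/2),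
      HasDerivAt (fun x : ℝ => x/2 - 3/4 * x^2 + x^3/3) ((1/2 - x) * (1 - x)) x := by
    intro x _
    have := (((hasDerivAt_id x).div_const 2).sub
      ((hasDerivAt_pow 2 x).const_mul (3/4 : ℝ))).add ((hasDerivAt_pow 3 x).div_const 3)
    exact this.congr_deriv (by ring)
  rw [intervalIntegral.integral_eq_sub_of_hasDerivAt h
    (Continuous.intervalIntegrable (by continuity) _ _)]
  norm_num

lemma I2 : ∫ x in (0:ℝ)..(1/2), x * ((1/2 - x) * (1 - x)) = 1/64 := by
  have h : ∀ x ∈ uIcc (0:ℝ) (1/2),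
      HasDerivAt (fun x : ℝ => x^2/4 - x^3/2 + x^4/4) (x * ((1/2 - x) * (1 - x))) x := by
    intro x _
    have := (((hasDerivAt_pow 2 x).div_const 4).sub
      ((hasDerivAt_pow 3 x).div_const 2)).add ((hasDerivAt_pow 4 x).div_const 4)
    exact this.congr_deriv (by ring)
  rw [intervalIntegral.integral_eq_sub_of_hasDerivAt h
    (Continuous.intervalIntegrable (by continuity) _ _)]
  norm_num

lemma I3 : ∫ x in (0:ℝ)..(1/2), (1/8 - x^2/2) * (1 - x) = 13/384 := by
  have h : ∀ x ∈ uIcc (0:ℝ) (1/2),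
      HasDerivAt (fun x : ℝ => x/8 - x^2/16 - x^3/6 + x^4/8) ((1/8 - x^2/2) * (1 - x)) x := by
    intro x _
    have := ((((hasDerivAt_id x).div_const 8).sub
      ((hasDerivAt_pow 2 x).div_const 16)).sub
      ((hasDerivAt_pow 3 x).div_const 6)).add ((hasDerivAt_pow 4 x).div_const 8)
    exact this.congr_deriv (by ring)
  rw [intervalIntegral.integral_eq_sub_of_hasDerivAt h
    (Continuous.intervalIntegrable (by continuity) _ _)]
  norm_num

lemma I4 : ∫ x in (0:ℝ)..(13/40), (1 - x) = 871/3200 := by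
  have h : ∀ x ∈ uIcc (0:ℝ) (13/40),
      HasDerivAt (fun x : ℝ => x - x^2/2) (1 - x) x := by
    intro x _
    have := (hasDerivAt_id x).sub ((hasDerivAt_pow 2 x).div_const 2)
    exact this.congr_deriv (by ring)
  rw [intervalIntegral.integral_eq_sub_of_hasDerivAt h
    (Continuous.intervalIntegrable (by continuity) _ _)]
  norm_num

lemma I5 : ∫ x in (0:ℝ)..(13/40), x * (1 - x) = 7943/192000 := by
  have h : ∀ x ∈ uIcc (0:ℝ) (13/40),
      HasDerivAt (fun x : ℝ => x^2/2 - x^3/3) (x * (1 - x)) x := by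
    intro x _
    have := ((hasDerivAt_pow 2 x).div_const 2).sub ((hasDerivAt_pow 3 x).div_const 3)
    exact this.congr_deriv (by ring)
  rw [intervalIntegral.integral_eq_sub_of_hasDerivAt h
    (Continuous.intervalIntegrable (by continuity) _ _)]
  norm_num

lemma icc_int (f : ℝ → ℝ) (a b : ℝ) (h : a ≤ b) :
    ∫ x in Icc a b, f x = ∫ x in a..b, f x := by
  rw [integral_Icc_eq_integral_Ioc, ← intervalIntegral.integral_of_le h]

-- volume of S3
lemma vol3 : volume S3 = ENNReal.ofReal (5/48) := by
  rw [Measure.volume_eq_prod, Measure.prod_apply meas3]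
  have key : (fun a : ℝ => (volume : Measure (ℝ × ℝ)) (Prod.mk a ⁻¹' S3))
      = (Icc (0:ℝ) (1/2)).indicator
        (fun a => ENNReal.ofReal ((1/2 - a) * (1 - a))) := by
    funext a
    by_cases h0 : 0 ≤ a
    · rw [slice3_pos a h0, Measure.volume_eq_prod, Measure.prod_prod, Real.volume_Icc,
        Real.volume_Icc]
      by_cases h1 : a ≤ 1/2
      · rw [indicator_of_mem (mem_Icc.mpr ⟨h0, h1⟩), ENNReal.ofReal_mul (by linarith)]
      · rw [indicator_of_notMem (fun h => h1 h.2)]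
        rw [ENNReal.ofReal_eq_zero.2 (by linarith), zero_mul]
    · rw [slice3_neg a (by linarith), indicator_of_notMem (fun h => h0 h.1)]
      simp
  rw [key]
  refine Eq.trans (lintegral_indicator measurableSet_Icc _) ?_
  rw [← ofReal_integral_eq_lintegral_ofReal]
  · rw [icc_int _ _ _ (by norm_num), I1]
  · apply Continuous.integrableOn_Icc
    continuity
  · filter_upwards [ae_restrict_mem measurableSet_Icc] with a ha
    have h1 := ha.1; have h2 := ha.2
    simp only [Pi.zero_apply]
    nlinarith

lemma vol2 : volume S2 = ENNReal.ofReal (871/3200) := by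
  rw [Measure.volume_eq_prod, Measure.prod_apply meas2]
  have key : (fun a : ℝ => (volume : Measure ℝ) (Prod.mk a ⁻¹' S2))
      = (Icc (0:ℝ) (13/40)).indicator (fun a => ENNReal.ofReal (1 - a)) := by
    funext a
    by_cases h : a ∈ Icc (0:ℝ) (13/40)
    · rw [slice2_pos a h.1 h.2, Real.volume_Icc, indicator_of_mem h]
    · rw [slice2_neg a h, indicator_of_notMem h]
      simp
  rw [key]
  refine Eq.trans (lintegral_indicator measurableSet_Icc _) ?_
  rw [← ofReal_integral_eq_lintegral_ofReal]
  · rw [icc_int _ _ _ (by norm_num), I4]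
  · apply Continuous.integrableOn_Icc
    continuity
  · filter_upwards [ae_restrict_mem measurableSet_Icc] with a ha
    have := ha.2; simp only [Pi.zero_apply]; linarith

-- generic Fubini step for integrals over S3
lemma fubini3 (f : ℝ × ℝ × ℝ → ℝ) (hf : Continuous f) :
    ∫ p in S3, f p = ∫ a, ∫ y, (Prod.mk a ⁻¹' S3).indicator (fun y => f (a, y)) y := by
  rw [← integral_indicator meas3, Measure.volume_eq_prod,
    integral_prod _ ((integrable_indicator_iff meas3).2
      (hf.continuousOn.integrableOn_compact compact3))]
  rfl

lemma fubini2 (f : ℝ × ℝ → ℝ) (hf : Continuous f) :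
    ∫ q in S2, f q = ∫ a, ∫ y, (Prod.mk a ⁻¹' S2).indicator (fun y => f (a, y)) y := by
  rw [← integral_indicator meas2, Measure.volume_eq_prod,
    integral_prod _ ((integrable_indicator_iff meas2).2
      (hf.continuousOn.integrableOn_compact compact2))]
  rfl

lemma intA : ∫ p in S3, p.1 = 1/64 := by
  rw [fubini3 _ continuous_fst]
  have key : (fun a : ℝ => ∫ y : ℝ × ℝ, (Prod.mk a ⁻¹' S3).indicator (fun _ => a) y)
      = (Icc (0:ℝ) (1/2)).indicator (fun a => a * ((1/2 - a) * (1 - a))) := by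
    funext a
    rw [integral_indicator]
    swap
    · by_cases h0 : 0 ≤ a
      · rw [slice3_pos a h0]; exact (measurableSet_Icc.prod measurableSet_Icc)
      · rw [slice3_neg a (by linarith)]; exact MeasurableSet.empty
    by_cases h0 : 0 ≤ a
    · rw [slice3_pos a h0, setIntegral_const, measureReal_def, Measure.volume_eq_prod, Measure.prod_prod,
        Real.volume_Icc, Real.volume_Icc]
      by_cases h1 : a ≤ 1/2
      · rw [indicator_of_mem (mem_Icc.mpr ⟨h0, h1⟩), ← ENNReal.ofReal_mul (by linarith),
          ENNReal.toReal_ofReal (by nlinarith), smul_eq_mul]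
        ring
      · rw [indicator_of_notMem (fun h => h1 h.2), ENNReal.ofReal_eq_zero.2 (by linarith),
          zero_mul, ENNReal.toReal_zero, zero_smul]
    · rw [slice3_neg a (by linarith), indicator_of_notMem (fun h => h0 h.1)]
      simp
  rw [key, integral_indicator measurableSet_Icc, icc_int _ _ _ (by norm_num), I2]

lemma intB : ∫ p in S3, p.2.1 = 13/384 := by
  rw [fubini3 (fun p => p.2.1) (continuous_fst.comp continuous_snd)]
  have key : (fun a : ℝ => ∫ y : ℝ × ℝ, (Prod.mk a ⁻¹' S3).indicator (fun y => y.1) y)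
      = (Icc (0:ℝ) (1/2)).indicator (fun a => (1/8 - a^2/2) * (1 - a)) := by
    funext a
    rw [integral_indicator]
    swap
    · by_cases h0 : 0 ≤ a
      · rw [slice3_pos a h0]; exact (measurableSet_Icc.prod measurableSet_Icc)
      · rw [slice3_neg a (by linarith)]; exact MeasurableSet.empty
    by_cases h0 : 0 ≤ a
    · rw [slice3_pos a h0]
      have hpm : ∫ y : ℝ × ℝ in Icc a (1/2) ×ˢ Icc a 1, y.1
          = (∫ x in Icc a (1/2), x) * ∫ y in Icc a 1, (1:ℝ) := by
        rw [Measure.volume_eq_prod]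
        simpa using setIntegral_prod_mul (μ := (volume : Measure ℝ)) (ν := (volume : Measure ℝ))
          (fun x : ℝ => x) (fun _ : ℝ => (1:ℝ)) (Icc a (1/2)) (Icc a 1)
      rw [hpm, setIntegral_const, measureReal_def, Real.volume_Icc, smul_eq_mul, mul_one]
      by_cases h1 : a ≤ 1/2
      · have hid : (∫ x in a..(1/2:ℝ), x) = ((1/2:ℝ)^2 - a^2)/2 := by simp
        rw [indicator_of_mem (mem_Icc.mpr ⟨h0, h1⟩), icc_int _ _ _ h1, hid,
          ENNReal.toReal_ofReal (by linarith)]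
        ring
      · rw [indicator_of_notMem (fun h => h1 h.2), Icc_eq_empty (by linarith),
          Measure.restrict_empty, integral_zero_measure, zero_mul]
    · rw [slice3_neg a (by linarith), indicator_of_notMem (fun h => h0 h.1)]
      simp
  rw [key, integral_indicator measurableSet_Icc, icc_int _ _ _ (by norm_num), I3]

lemma intC : ∫ q in S2, q.1 = 7943/192000 := by
  rw [fubini2 _ continuous_fst]
  have key : (fun a : ℝ => ∫ y : ℝ, (Prod.mk a ⁻¹' S2).indicator (fun _ => a) y)
      = (Icc (0:ℝ) (13/40)).indicator (fun a => a * (1 - a)) := by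
    funext a
    rw [integral_indicator]
    swap
    · by_cases h : a ∈ Icc (0:ℝ) (13/40)
      · rw [slice2_pos a h.1 h.2]; exact measurableSet_Icc
      · rw [slice2_neg a h]; exact MeasurableSet.empty
    by_cases h : a ∈ Icc (0:ℝ) (13/40)
    · rw [slice2_pos a h.1 h.2, setIntegral_const, measureReal_def, Real.volume_Icc,
        ENNReal.toReal_ofReal (by linarith [h.2]), smul_eq_mul, indicator_of_mem h]
      ring
    · rw [slice2_neg a h, indicator_of_notMem h]
      simp
  rw [key, integral_indicator measurableSet_Icc, icc_int _ _ _ (by norm_num), I5]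

end UIP

theorem uniform_interpolation_not_stable :
    -- coordinates: p.1 = x_a, p.2.1 = x_b, p.2.2 = x_d;
    -- constraints 0 ≤ x_a, x_a ≤ x_b ≤ 1/2, x_a ≤ x_d ≤ 1
    (∫ p in {p : ℝ × ℝ × ℝ | 0 ≤ p.1 ∧ p.1 ≤ p.2.1 ∧ p.2.1 ≤ 1/2 ∧ p.1 ≤ p.2.2 ∧ p.2.2 ≤ 1},
        p.1) /
      (volume {p : ℝ × ℝ × ℝ |
        0 ≤ p.1 ∧ p.1 ≤ p.2.1 ∧ p.2.1 ≤ 1/2 ∧ p.1 ≤ p.2.2 ∧ p.2.2 ≤ 1}).toReal = 3/20 ∧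
    (∫ p in {p : ℝ × ℝ × ℝ | 0 ≤ p.1 ∧ p.1 ≤ p.2.1 ∧ p.2.1 ≤ 1/2 ∧ p.1 ≤ p.2.2 ∧ p.2.2 ≤ 1},
        p.2.1) /
      (volume {p : ℝ × ℝ × ℝ |
        0 ≤ p.1 ∧ p.1 ≤ p.2.1 ∧ p.2.1 ≤ 1/2 ∧ p.1 ≤ p.2.2 ∧ p.2.2 ≤ 1}).toReal = 13/40 ∧
    -- after additionally imposing x_b = 13/40 (q.1 = x_a, q.2 = x_d):
    (∫ q in {q : ℝ × ℝ | 0 ≤ q.1 ∧ q.1 ≤ 13/40 ∧ q.1 ≤ q.2 ∧ q.2 ≤ 1}, q.1) /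
      (volume {q : ℝ × ℝ | 0 ≤ q.1 ∧ q.1 ≤ 13/40 ∧ q.1 ≤ q.2 ∧ q.2 ≤ 1}).toReal
      = 611/4020 ∧
    (611/4020 : ℝ) ≠ 3/20 := by
  have h3 : ({p : ℝ × ℝ × ℝ | 0 ≤ p.1 ∧ p.1 ≤ p.2.1 ∧ p.2.1 ≤ 1/2 ∧ p.1 ≤ p.2.2 ∧ p.2.2 ≤ 1})
      = UIP.S3 := rfl
  have h2 : ({q : ℝ × ℝ | 0 ≤ q.1 ∧ q.1 ≤ 13/40 ∧ q.1 ≤ q.2 ∧ q.2 ≤ 1}) = UIP.S2 := rfl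
  rw [h3, h2, UIP.vol3, UIP.vol2, UIP.intA, UIP.intB, UIP.intC,
    ENNReal.toReal_ofReal (by norm_num), ENNReal.toReal_ofReal (by norm_num)]
  norm_num
end

section
/- Uniqueness of balanced stable interpolation on chains: suppose f assigns to each finite chain 0 = y_0, x_1, ..., x_n, y_1 = 1 (ordered y_0 ≤ x_1 ≤ ... ≤ x_n ≤ y_1 with y_0, y_1 fixed values a ≤ b) values f(x_1),...,f(x_n) ∈ [a,b] such that: (balanced) if n = 1 then f(x_1) = (a+b)/2, and (stable) fixing any x_i to f(x_i) and splitting the chain into the two subchains does not change the values assigned to the other variables. Then f(x_i) = a + (i/(n+1))·(b-a) for all i. -/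
theorem unique_balanced_stable_interpolation_on_chains
    (f : ℝ → ℝ → (n : ℕ) → Fin n → ℝ)
    -- the scheme produces a nondecreasing tuple of values in [a,b]
    (hrange : ∀ a b : ℝ, a ≤ b → ∀ n : ℕ, Monotone (f a b n) ∧ ∀ i : Fin n, f a b n i ∈ Set.Icc a b)
    -- balanced: a single interior variable is interpolated to the midpoint
    (hbal : ∀ a b : ℝ, a ≤ b → ∀ i : Fin 1, f a b 1 i = (a + b) / 2)
    -- stable: fixing x_i to its value and splitting the chain reproduces the same values
    (hstab : ∀ a b : ℝ, a ≤ b → ∀ n : ℕ, ∀ i : Fin n,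
      (∀ j : Fin (i : ℕ), f a (f a b n i) (i : ℕ) j
          = f a b n ⟨(j : ℕ), lt_trans j.isLt i.isLt⟩) ∧
      (∀ j : Fin (n - (i : ℕ) - 1), f (f a b n i) b (n - (i : ℕ) - 1) j
          = f a b n ⟨(i : ℕ) + 1 + (j : ℕ), by have h1 := j.isLt; have h2 := i.isLt; omega⟩)) :
    ∀ a b : ℝ, a ≤ b → ∀ n : ℕ, ∀ i : Fin n,
      f a b n i = a + (((i : ℕ) + 1) / (n + 1)) * (b - a) := by
  suffices h : ∀ n : ℕ, ∀ a b : ℝ, a ≤ b → ∀ i : Fin n,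
      f a b n i = a + (((i : ℕ) + 1) / (n + 1)) * (b - a) by
    intro a b hab n i; exact h n a b hab i
  intro n
  induction n using Nat.strong_induction_on with
  | _ n IH =>
    intro a b hab i
    match n, i with
    | 1, i =>
      have h0 : i = ⟨0, by omega⟩ := by ext; omega
      subst h0
      rw [hbal a b hab]
      push_cast
      ring
    | (m+2), i =>
      set M : ℝ := (m : ℝ) with hM
      have hM0 : (0:ℝ) ≤ M := by positivity
      have hM2 : (M + 2) ≠ 0 := by positivity
      have hM3 : (M + 3) ≠ 0 := by positivity
      have hmemv0 := (hrange a b hab (m+2)).2 ⟨0, by omega⟩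
      have hmemvl := (hrange a b hab (m+2)).2 ⟨m+1, by omega⟩
      set v0 := f a b (m+2) ⟨0, by omega⟩ with hv0def
      set vl := f a b (m+2) ⟨m+1, by omega⟩ with hvldef
      have hv0b : v0 ≤ b := hmemv0.2
      have havl : a ≤ vl := hmemvl.1
      have hmk : ∀ (k l : ℕ) (hk : k < m+2) (hl : l < m+2), k = l →
          f a b (m+2) ⟨k, hk⟩ = f a b (m+2) ⟨l, hl⟩ := by
        intro k l hk hl h; subst h; rfl
      -- right stability at index 0
      have hR : ∀ (k : ℕ) (hk : k < m+1) (hk' : k+1 < m+2),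
          f v0 b (m+1) ⟨k, hk⟩ = f a b (m+2) ⟨k+1, hk'⟩ := by
        intro k hk hk'
        have h := (hstab a b hab (m+2) ⟨0, by omega⟩).2
          ⟨k, show k < m+2-0-1 by omega⟩
        exact h.trans (hmk _ _ _ _ (show 0+1+k = k+1 by omega))
      -- left stability at index m+1
      have hL : ∀ (k : ℕ) (hk : k < m+1) (hk' : k < m+2),
          f a vl (m+1) ⟨k, hk⟩ = f a b (m+2) ⟨k, hk'⟩ := by
        intro k hk hk'
        have h := (hstab a b hab (m+2) ⟨m+1, by omega⟩).1 ⟨k, show k < m+1 from hk⟩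
        exact h.trans (hmk _ _ _ _ rfl)
      -- IH formulas
      have hIHR : ∀ (k : ℕ) (hk : k < m+1),
          f v0 b (m+1) ⟨k, hk⟩ = v0 + (((k:ℝ) + 1) / (M + 2)) * (b - v0) := by
        intro k hk
        have h := IH (m+1) (by omega) v0 b hv0b ⟨k, hk⟩
        rw [h]; simp only [Fin.val_mk]; push_cast; ring
      have hIHL : ∀ (k : ℕ) (hk : k < m+1),
          f a vl (m+1) ⟨k, hk⟩ = a + (((k:ℝ) + 1) / (M + 2)) * (vl - a) := by
        intro k hk
        have h := IH (m+1) (by omega) a vl havl ⟨k, hk⟩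
        rw [h]; simp only [Fin.val_mk]; push_cast; ring
      -- the two equations
      have e1 : vl = v0 + ((M + 1) / (M + 2)) * (b - v0) := by
        have h : f v0 b (m+1) ⟨m, by omega⟩ = vl := hR m (by omega) (by omega)
        rw [← h, hIHR m (by omega)]
      have e2 : v0 = a + (1 / (M + 2)) * (vl - a) := by
        have h : f a vl (m+1) ⟨0, by omega⟩ = v0 := hL 0 (by omega) (by omega)
        rw [← h, hIHL 0 (by omega)]
        norm_num
      -- solve for v0
      have key : (M + 1) * (v0 * (M + 3) - (a * (M + 3) + (b - a))) = 0 := by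
        field_simp at e1 e2
        linear_combination (M + 2) * e2 + e1
      have h3 : v0 * (M + 3) = a * (M + 3) + (b - a) := by
        rcases mul_eq_zero.mp key with h | h
        · exfalso; nlinarith
        · linarith
      have hv0 : v0 = a + (1 / (M + 3)) * (b - a) := by
        have h : v0 * (M + 3) = (a + (1 / (M + 3)) * (b - a)) * (M + 3) := by
          rw [h3]; field_simp
        exact mul_right_cancel₀ hM3 h
      -- conclude for each index
      obtain ⟨iv, hi⟩ := i
      match iv, hi with
      | 0, hi =>
        show v0 = _
        rw [hv0]
        simp only [Fin.val_mk]
        push_cast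
        ring
      | (k+1), hi =>
        have h : f v0 b (m+1) ⟨k, by omega⟩ = f a b (m+2) ⟨k+1, hi⟩ :=
          hR k (by omega) hi
        rw [← h, hIHR k (by omega), hv0]
        simp only [Fin.val_mk]
        push_cast
        field_simp
        ring
end
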